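/- arXiv:1501.02552 — 6 statements merged into one kernel-verified Lean document; each statement's English description precedes it below -/
import Mathlib

section
/- For all j ∈ ℕ₀ and m ∈ {0,1,...,2^j − 1}, the number 2^j φ(m) is a natural number and φ(2^j φ(m)) = m / 2^j. -/
open MeasureTheory Finset

/-- Base-2 radical inverse: for `n = ∑ nᵢ 2ⁱ`, `radInv n = ∑ nᵢ 2^{-i-1}`. -/
noncomputable def radInv (n : ℕ) : ℝ :=
  ∑ i ∈ Finset.range n, if n.testBit i then (1:ℝ)/2^(i+1) else 0

/-- L∞-normalized Haar function supported on `I_{j,m} = [m/2^j, (m+1)/2^j)`. -/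
noncomputable def haarFn (j m : ℕ) (t : ℝ) : ℝ :=
  if (m:ℝ)/2^j ≤ t ∧ t < (m:ℝ)/2^j + 1/2^(j+1) then 1
  else if (m:ℝ)/2^j + 1/2^(j+1) ≤ t ∧ t < ((m:ℝ)+1)/2^j then -1
  else 0

/-- Local discrepancy of the first `N` terms of the sequence `x`. -/
noncomputable def disc (x : ℕ → ℝ) (N : ℕ) (t : ℝ) : ℝ :=
  (∑ n ∈ Finset.range N, Set.indicator (Set.Ico (0:ℝ) t) (fun _ => (1:ℝ)) (x n)) / N - t

/-- Symmetrized van der Corput sequence: `z_{2m} = φ(m)`, `z_{2m+1} = 1 - φ(m)`. -/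
noncomputable def vdcSym (n : ℕ) : ℝ :=
  if n % 2 = 0 then radInv (n / 2) else 1 - radInv (n / 2)

/-- Haar coefficient `μ_{j,m}` of the local discrepancy of the first `N` terms of `x`. -/
noncomputable def haarCoeff (x : ℕ → ℝ) (N j m : ℕ) : ℝ :=
  ∫ t in (0:ℝ)..1, disc x N t * haarFn j m t

lemma radInv_eq_sum (n M : ℕ) (h : n ≤ M) :
    radInv n = ∑ i ∈ Finset.range M, if n.testBit i then (1:ℝ)/2^(i+1) else 0 := by
  unfold radInv
  refine Finset.sum_subset (Finset.range_subset_range.mpr h) ?_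
  intro i hi hni
  simp only [Finset.mem_range, not_lt] at hni
  have : n < 2 ^ i := lt_of_lt_of_le (Nat.lt_two_pow_self (n := n)) (Nat.pow_le_pow_right (by norm_num) hni)
  simp [Nat.testBit_lt_two_pow this]

lemma radInv_bit (n : ℕ) : radInv n = ((n % 2 : ℕ) : ℝ)/2 + radInv (n/2) / 2 := by
  rw [radInv_eq_sum n (n+1) (Nat.le_succ n), Finset.sum_range_succ']
  have h0 : (if n.testBit 0 then (1:ℝ)/2^(0+1) else 0) = ((n % 2 : ℕ) : ℝ)/2 := by
    rcases Nat.mod_two_eq_zero_or_one n with h | h <;> simp [Nat.testBit_zero, h] <;> norm_num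
  rw [h0, radInv_eq_sum (n/2) n (Nat.div_le_self n 2), Finset.sum_div, add_comm]
  congr 1
  refine Finset.sum_congr rfl fun i _ => ?_
  rw [Nat.testBit_add_one]
  by_cases h : (n/2).testBit i <;> simp [h] <;> ring

lemma radInv_add_pow (k j : ℕ) (h : k < 2^j) :
    radInv (k + 2^j) = radInv k + 1/2^(j+1) := by
  have hj : j < k + 2^j := lt_of_lt_of_le (Nat.lt_two_pow_self (n := j)) (Nat.le_add_left _ _)
  rw [radInv_eq_sum k (k + 2^j) (Nat.le_add_right _ _)]
  unfold radInv
  rw [← Finset.add_sum_erase _ _ (Finset.mem_range.mpr hj),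
      ← Finset.add_sum_erase _ (fun i => if k.testBit i then (1:ℝ)/2^(i+1) else 0)
        (Finset.mem_range.mpr hj)]
  have ht : (k + 2^j).testBit j = true := by
    rw [Nat.add_comm, Nat.testBit_two_pow_add_eq, Nat.testBit_lt_two_pow h]; rfl
  have hk : k.testBit j = false := Nat.testBit_lt_two_pow h
  rw [ht, hk]
  have heq : ∀ i ∈ (Finset.range (k + 2^j)).erase j,
      (if (k + 2^j).testBit i then (1:ℝ)/2^(i+1) else 0)
      = (if k.testBit i then (1:ℝ)/2^(i+1) else 0) := by
    intro i hi
    have hij : i ≠ j := Finset.ne_of_mem_erase hi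
    rcases lt_or_gt_of_ne hij with hlt | hgt
    · rw [Nat.add_comm, Nat.testBit_two_pow_add_gt hlt]
    · have h1 : k + 2^j < 2^i := by
        calc k + 2^j < 2^j + 2^j := by omega
        _ = 2^(j+1) := by ring
        _ ≤ 2^i := Nat.pow_le_pow_right (by norm_num) hgt
      rw [Nat.testBit_lt_two_pow h1, Nat.testBit_lt_two_pow (show k < 2^i by omega)]
  rw [Finset.sum_congr rfl heq]
  simp
  ring

lemma radInv_key (j m : ℕ) (hm : m < 2^j) :
    ∃ k : ℕ, k < 2^j ∧ (k:ℝ) = 2^j * radInv m ∧ radInv k = (m:ℝ) / 2^j := by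
  induction j generalizing m with
  | zero =>
    interval_cases m
    exact ⟨0, by norm_num, by simp [radInv], by simp [radInv]⟩
  | succ j ih =>
    have hq : m / 2 < 2^j := by omega
    obtain ⟨k, hklt, hk1, hk2⟩ := ih (m / 2) hq
    rcases Nat.mod_two_eq_zero_or_one m with hb | hb
    · refine ⟨k, by omega, ?_, ?_⟩
      · rw [radInv_bit m, hb]
        push_cast
        rw [hk1]; ring
      · rw [hk2]
        have : (m : ℝ) = 2 * ((m/2 : ℕ) : ℝ) := by
          have : m = 2 * (m / 2) := by omega
          exact_mod_cast congrArg (Nat.cast : ℕ → ℝ) this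
        rw [this]; ring
    · refine ⟨k + 2^j, by omega, ?_, ?_⟩
      · rw [radInv_bit m, hb]
        push_cast
        rw [hk1]; ring
      · rw [radInv_add_pow k j hklt, hk2]
        have : (m : ℝ) = 2 * ((m/2 : ℕ) : ℝ) + 1 := by
          have : m = 2 * (m / 2) + 1 := by omega
          exact_mod_cast congrArg (Nat.cast : ℕ → ℝ) this
        rw [this]; ring

theorem radInv_two_pow_mul_radInv (j m : ℕ) (hm : m < 2^j) :
    ∃ k : ℕ, (k:ℝ) = 2^j * radInv m ∧ radInv k = (m:ℝ) / 2^j := by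
  obtain ⟨k, _, h1, h2⟩ := radInv_key j m hm
  exact ⟨k, h1, h2⟩
end

section
/- For every A ∈ ℕ₀, the sum ∑_{s=0}^{A} |1 − 2φ(s)| lies between A/2 and A/2 + 1. -/
open MeasureTheory Finset

lemma radInv_nonneg (n : ℕ) : 0 ≤ radInv n := by
  apply Finset.sum_nonneg
  intro i _
  split <;> positivity

lemma geo_half (K : ℕ) : ∑ i ∈ Finset.range K, ((1:ℝ)/2)^(i+1) = 1 - (1/2)^K := by
  induction K with
  | zero => simp
  | succ k ih => rw [Finset.sum_range_succ, ih]; ring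

lemma radInv_lt_one (n : ℕ) : radInv n < 1 := by
  have h : radInv n ≤ 1 - (1/2:ℝ)^n := by
    rw [← geo_half]
    apply Finset.sum_le_sum
    intro i _
    split
    · rw [div_pow, one_pow]
    · positivity
  have : (0:ℝ) < (1/2)^n := by positivity
  linarith

lemma radInv_eq_of_le {n K : ℕ} (h : n ≤ K) :
    radInv n = ∑ i ∈ Finset.range K, (if n.testBit i then (1:ℝ)/2^(i+1) else 0) := by
  apply Finset.sum_subset (Finset.range_subset_range.2 h)
  intro i hi hni
  simp only [Finset.mem_range, not_lt] at hni
  have : n.testBit i = false :=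
    Nat.testBit_eq_false_of_lt (lt_of_lt_of_le (Nat.lt_two_pow_self (n := n)) (Nat.pow_le_pow_right (by norm_num) hni))
  simp [this]

lemma radInv_two_mul (m : ℕ) : radInv (2*m) = radInv m / 2 := by
  rw [radInv_eq_of_le (show 2*m ≤ 2*m+2 by omega), Finset.sum_range_succ']
  have h0 : (2*m).testBit 0 = false := by simp [Nat.testBit_zero, Nat.mul_mod_right]
  have h1 : ∀ i, (2*m).testBit (i+1) = m.testBit i := by
    intro i; rw [Nat.testBit_succ]; congr 1; omega
  rw [radInv_eq_of_le (show m ≤ 2*m+1 by omega)]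
  simp only [h0, h1, Bool.false_eq_true, if_false, add_zero, Finset.sum_div]
  apply Finset.sum_congr rfl
  intro i _
  split <;> ring_nf

lemma radInv_two_mul_add_one (m : ℕ) : radInv (2*m+1) = 1/2 + radInv m / 2 := by
  rw [radInv_eq_of_le (show 2*m+1 ≤ 2*m+2 by omega), Finset.sum_range_succ']
  have h0 : (2*m+1).testBit 0 = true := by
    simp [Nat.testBit_zero, Nat.add_mul_mod_self_left, Nat.mul_add_mod]
  have h1 : ∀ i, (2*m+1).testBit (i+1) = m.testBit i := by
    intro i; rw [Nat.testBit_succ]; congr 1; omega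
  rw [radInv_eq_of_le (show m ≤ 2*m+1 by omega)]
  simp only [h0, h1, if_true, Finset.sum_div]
  rw [add_comm]
  congr 1
  · norm_num
  · apply Finset.sum_congr rfl
    intro i _
    split <;> ring_nf

lemma abs_even (k : ℕ) : |1 - 2 * radInv (2*k)| = 1 - radInv k := by
  have h := radInv_lt_one k
  rw [radInv_two_mul, abs_of_nonneg (by linarith)]
  ring

lemma abs_odd (k : ℕ) : |1 - 2 * radInv (2*k+1)| = radInv k := by
  have h := radInv_nonneg k
  rw [radInv_two_mul_add_one, abs_of_nonpos (by linarith)]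
  ring

lemma sum_pairs (k : ℕ) : ∑ s ∈ Finset.range (2*k), |1 - 2 * radInv s| = k := by
  induction k with
  | zero => simp
  | succ n ih =>
    have : 2*(n+1) = (2*n+1)+1 := by ring
    rw [this, Finset.sum_range_succ, Finset.sum_range_succ, ih, abs_even, abs_odd]
    push_cast
    ring

theorem sum_abs_one_sub_two_radInv_bounds (A : ℕ) :
    (A:ℝ)/2 ≤ ∑ s ∈ Finset.range (A+1), |1 - 2 * radInv s| ∧
      ∑ s ∈ Finset.range (A+1), |1 - 2 * radInv s| ≤ (A:ℝ)/2 + 1 := by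
  rcases Nat.even_or_odd A with ⟨k, hk⟩ | ⟨k, hk⟩
  · have hA : A = 2*k := by omega
    subst hA
    rw [Finset.sum_range_succ, sum_pairs, abs_even]
    have h0 := radInv_nonneg k
    have h1 := radInv_lt_one k
    push_cast
    constructor <;> linarith
  · have hA : A = 2*k+1 := by omega
    subst hA
    have : 2*k+1+1 = 2*(k+1) := by ring
    rw [this, sum_pairs]
    push_cast
    constructor <;> linarith
end

section
/- For the symmetrized van der Corput sequence, the Haar coefficient μ_{-1,0} = ∫_0^1 D_N(t) dt of the local discrepancy satisfies μ_{-1,0} = 0 if N = 2M, and |μ_{-1,0}| = |1/(2N) − φ(M)/N| ≤ 1/(2N) if N = 2M+1. -/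
open MeasureTheory Finset

lemma radInv_le_one (n : ℕ) : radInv n ≤ 1 := by
  have h1 : radInv n ≤ ∑ i ∈ Finset.range n, (1/2:ℝ)^(i+1) := by
    apply Finset.sum_le_sum; intro i _
    split
    · rw [div_pow, one_pow]
    · positivity
  have h2 : ∑ i ∈ Finset.range n, (1/2:ℝ)^(i+1) = (1/2) * ∑ i ∈ Finset.range n, (1/2:ℝ)^i := by
    rw [Finset.mul_sum]; apply Finset.sum_congr rfl; intro i _; ring
  have := sum_geometric_two_le n
  linarith

lemma indic_integrable (c : ℝ) :
    IntervalIntegrable ((Set.Ioi c).indicator (fun _ => (1:ℝ))) volume 0 1 := by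
  rw [intervalIntegrable_iff_integrableOn_Ioc_of_le (by norm_num)]
  have h : IntegrableOn (fun _ => (1:ℝ)) (Set.Ioc (0:ℝ) 1) volume :=
    integrableOn_const (by simp [Real.volume_Ioc])
  exact h.indicator measurableSet_Ioi

lemma indic_integral (c : ℝ) (h0 : 0 ≤ c) (h1 : c ≤ 1) :
    ∫ t in (0:ℝ)..1, (Set.Ioi c).indicator (fun _ => (1:ℝ)) t = 1 - c := by
  rw [intervalIntegral.integral_of_le (by norm_num : (0:ℝ) ≤ 1),
    MeasureTheory.integral_indicator measurableSet_Ioi]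
  have : Set.Ioi c ∩ Set.Ioc (0:ℝ) 1 = Set.Ioc c 1 := by
    ext x; simp only [Set.mem_inter_iff, Set.mem_Ioi, Set.mem_Ioc]
    constructor
    · rintro ⟨a, b, d⟩; exact ⟨a, d⟩
    · rintro ⟨a, b⟩; exact ⟨a, lt_of_le_of_lt h0 a, b⟩
  rw [Measure.restrict_restrict measurableSet_Ioi, this]
  simp [Real.volume_Ioc, ENNReal.toReal_ofReal (by linarith : (0:ℝ) ≤ 1 - c)]
  exact h1

lemma vdcSym_even (m : ℕ) : vdcSym (2*m) = radInv m := by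
  simp [vdcSym, Nat.mul_mod_right, Nat.mul_div_cancel_left]

lemma vdcSym_odd (m : ℕ) : vdcSym (2*m+1) = 1 - radInv m := by
  have h1 : (2*m+1) % 2 = 1 := by omega
  have h2 : (2*m+1) / 2 = m := by omega
  simp [vdcSym, h1, h2]

lemma vdcSym_nonneg (n : ℕ) : 0 ≤ vdcSym n := by
  unfold vdcSym; split
  · exact radInv_nonneg _
  · linarith [radInv_le_one (n/2)]

lemma vdcSym_le_one (n : ℕ) : vdcSym n ≤ 1 := by
  unfold vdcSym; split
  · exact radInv_le_one _
  · linarith [radInv_nonneg (n/2)]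

lemma sum_pairs_s8 (g : ℕ → ℝ) (M : ℕ) :
    ∑ n ∈ Finset.range (2*M), g n = ∑ m ∈ Finset.range M, (g (2*m) + g (2*m+1)) := by
  induction M with
  | zero => simp
  | succ k ih =>
    have h : 2*(k+1) = 2*k + 1 + 1 := by ring
    rw [h, Finset.sum_range_succ, Finset.sum_range_succ, ih, Finset.sum_range_succ]
    ring

set_option maxHeartbeats 1000000 in
lemma integral_disc (N : ℕ) :
    ∫ t in (0:ℝ)..1, disc vdcSym N t
      = (∑ n ∈ Finset.range N, (1 - vdcSym n))/N - 1/2 := by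
  have hfun : Set.EqOn (disc vdcSym N)
      (fun t => (∑ n ∈ Finset.range N,
        (Set.Ioi (vdcSym n)).indicator (fun _ => (1:ℝ)) t)/N - t) (Set.uIcc 0 1) := by
    intro t _
    unfold disc
    congr 2
    apply Finset.sum_congr rfl
    intro n _
    simp only [Set.indicator_apply, Set.mem_Ico, Set.mem_Ioi,
      and_iff_right (vdcSym_nonneg n)]
  rw [intervalIntegral.integral_congr hfun]
  have hsum : IntervalIntegrable
      (fun t => ∑ n ∈ Finset.range N, (Set.Ioi (vdcSym n)).indicator (fun _ => (1:ℝ)) t)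
      volume 0 1 := by
    have h := IntervalIntegrable.sum (μ := volume) (a := (0:ℝ)) (b := 1) (Finset.range N)
      (f := fun n => (Set.Ioi (vdcSym n)).indicator (fun _ => (1:ℝ)))
      (fun n _ => indic_integrable _)
    convert h using 1
    · rfl
    ext t
    simp [Finset.sum_apply]
  rw [intervalIntegral.integral_sub (hsum.div_const _) (continuous_id'.intervalIntegrable 0 1)]
  rw [intervalIntegral.integral_div,
    intervalIntegral.integral_finset_sum (fun n _ => indic_integrable _)]
  rw [Finset.sum_congr rfl
    (fun n _ => indic_integral _ (vdcSym_nonneg n) (vdcSym_le_one n))]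
  rw [integral_id]
  norm_num

theorem haarCoeff_neg_one_sym (N M : ℕ) (hN : 0 < N) :
    (N = 2*M → ∫ t in (0:ℝ)..1, disc vdcSym N t = 0) ∧
    (N = 2*M+1 →
      |∫ t in (0:ℝ)..1, disc vdcSym N t| = |1/(2*N) - radInv M / N| ∧
      |∫ t in (0:ℝ)..1, disc vdcSym N t| ≤ 1/(2*N)) := by
  constructor
  · intro hNM
    subst hNM
    rw [integral_disc, sum_pairs_s8]
    have : ∀ m ∈ Finset.range M, ((1 - vdcSym (2*m)) + (1 - vdcSym (2*m+1))) = 1 := by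
      intro m _; rw [vdcSym_even, vdcSym_odd]; ring
    rw [Finset.sum_congr rfl this, Finset.sum_const, Finset.card_range]
    have hM : 0 < M := by omega
    have hM' : (M:ℝ) ≠ 0 := Nat.cast_ne_zero.2 (by omega)
    push_cast
    field_simp
    ring
  · intro hNM
    subst hNM
    have hval : ∫ t in (0:ℝ)..1, disc vdcSym (2*M+1) t
        = 1/(2*(2*M+1:ℕ)) - radInv M / (2*M+1:ℕ) := by
      rw [integral_disc, Finset.sum_range_succ, sum_pairs_s8]
      have : ∀ m ∈ Finset.range M, ((1 - vdcSym (2*m)) + (1 - vdcSym (2*m+1))) = 1 := by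
        intro m _; rw [vdcSym_even, vdcSym_odd]; ring
      rw [Finset.sum_congr rfl this, Finset.sum_const, Finset.card_range, vdcSym_even]
      have hM' : ((2*M+1:ℕ):ℝ) ≠ 0 := by positivity
      push_cast at hM' ⊢
      field_simp
      ring
    rw [hval]
    refine ⟨rfl, ?_⟩
    have h0 := radInv_nonneg M
    have h1 := radInv_le_one M
    have hNpos : (0:ℝ) < (2*M+1:ℕ) := by positivity
    have h2 : radInv M / ((2*M+1:ℕ):ℝ) ≤ 1 / ((2*M+1:ℕ):ℝ) := by gcongr
    have h3 : 0 ≤ radInv M / ((2*M+1:ℕ):ℝ) := by positivity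
    have h4 : (1:ℝ) / (2*((2*M+1:ℕ):ℝ)) = (1/((2*M+1:ℕ):ℝ))/2 := by ring
    rw [abs_le]
    constructor <;> push_cast at * <;> nlinarith
end

section
/- For a point x ∈ [0,1) in the open dyadic interval (m/2^j, (m+1)/2^j), the integral ∫_0^1 1_{[0,t)}(x) h_{j,m}(t) dt equals 2^{−j−1}(|2m + 1 − 2^{j+1} x| − 1), and this integral is 0 if x ∉ I_{j,m} or x = m/2^j. -/
open MeasureTheory Finset

lemma ind_intble (p q u v C : ℝ) :
    IntervalIntegrable (Set.indicator (Set.Ioc p q) (fun _ => C)) volume u v := by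
  rw [intervalIntegrable_iff]
  exact ((integrable_indicator_iff measurableSet_Ioc).2
    (integrableOn_const measure_Ioc_lt_top.ne)).integrableOn

lemma ind_integral (p q u v C : ℝ) (huv : u ≤ v) :
    (∫ t in u..v, Set.indicator (Set.Ioc p q) (fun _ => C) t)
      = max (min q v - max p u) 0 * C := by
  rw [intervalIntegral.integral_of_le huv, setIntegral_indicator measurableSet_Ioc,
    Set.Ioc_inter_Ioc, setIntegral_const, Real.volume_real_Ioc, smul_eq_mul]
  simp [min_comm, max_comm]

lemma haar_ae (j m : ℕ) : ∀ᵐ t : ℝ, haarFn j m t =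
    Set.indicator (Set.Ioc ((m:ℝ)/2^j) ((m:ℝ)/2^j + 1/2^(j+1))) (fun _ => (1:ℝ)) t
    + Set.indicator (Set.Ioc ((m:ℝ)/2^j + 1/2^(j+1)) (((m:ℝ)+1)/2^j)) (fun _ => (-1:ℝ)) t := by
  set a := (m:ℝ)/2^j
  set c := (m:ℝ)/2^j + 1/2^(j+1)
  set b := ((m:ℝ)+1)/2^j
  have hmeas : volume ({a, c, b} : Set ℝ) = 0 := (Set.toFinite _).measure_zero _
  filter_upwards [measure_eq_zero_iff_ae_notMem.1 hmeas] with t ht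
  simp only [Set.mem_insert_iff, Set.mem_singleton_iff, not_or] at ht
  obtain ⟨ha, hc, hb⟩ := ht
  have e1 : (a ≤ t ∧ t < c) ↔ (a < t ∧ t ≤ c) := by
    constructor <;> rintro ⟨h1, h2⟩
    · exact ⟨lt_of_le_of_ne h1 (Ne.symm ha), le_of_lt h2⟩
    · exact ⟨le_of_lt h1, lt_of_le_of_ne h2 hc⟩
  have e2 : (c ≤ t ∧ t < b) ↔ (c < t ∧ t ≤ b) := by
    constructor <;> rintro ⟨h1, h2⟩
    · exact ⟨lt_of_le_of_ne h1 (Ne.symm hc), le_of_lt h2⟩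
    · exact ⟨le_of_lt h1, lt_of_le_of_ne h2 hb⟩
  show (if a ≤ t ∧ t < c then (1:ℝ) else if c ≤ t ∧ t < b then -1 else 0) = _
  simp only [Set.indicator_apply, Set.mem_Ioc, e1, e2]
  split_ifs with h1 h2 h2 <;> norm_num
  exact absurd h2.1 (not_lt.2 h1.2)

lemma haar_intble (j m : ℕ) (u v : ℝ) :
    IntervalIntegrable (haarFn j m) volume u v :=
  ((ind_intble _ _ u v 1).add (ind_intble _ _ u v (-1))).congr_ae
    (ae_restrict_of_ae ((haar_ae j m).mono fun _ h => h.symm))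

lemma haar_integral (j m : ℕ) (u v : ℝ) (huv : u ≤ v) :
    ∫ t in u..v, haarFn j m t
      = max (min ((m:ℝ)/2^j + 1/2^(j+1)) v - max ((m:ℝ)/2^j) u) 0
        - max (min (((m:ℝ)+1)/2^j) v - max ((m:ℝ)/2^j + 1/2^(j+1)) u) 0 := by
  rw [intervalIntegral.integral_congr_ae ((haar_ae j m).mono fun t ht _ => ht),
    intervalIntegral.integral_add (ind_intble _ _ u v 1) (ind_intble _ _ u v (-1)),
    ind_integral _ _ _ _ _ huv, ind_integral _ _ _ _ _ huv]
  ring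

theorem integral_indicator_haar (j m : ℕ) (hm : m < 2^j) (x : ℝ)
    (hx : x ∈ Set.Ico (0:ℝ) 1) :
    (x ∈ Set.Ioo ((m:ℝ)/2^j) (((m:ℝ)+1)/2^j) →
      ∫ t in (0:ℝ)..1, Set.indicator (Set.Ico (0:ℝ) t) (fun _ => (1:ℝ)) x * haarFn j m t
        = (1/2^(j+1)) * (|2*(m:ℝ)+1 - 2^(j+1)*x| - 1)) ∧
    ((x ∉ Set.Ico ((m:ℝ)/2^j) (((m:ℝ)+1)/2^j) ∨ x = (m:ℝ)/2^j) →
      ∫ t in (0:ℝ)..1, Set.indicator (Set.Ico (0:ℝ) t) (fun _ => (1:ℝ)) x * haarFn j m t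
        = 0) := by
  obtain ⟨hx0, hx1⟩ := hx
  set a := (m:ℝ)/2^j with ha_def
  set c := (m:ℝ)/2^j + 1/2^(j+1) with hc_def
  set b := ((m:ℝ)+1)/2^j with hb_def
  have hj : (0:ℝ) < 2^j := by positivity
  have hj1 : (0:ℝ) < 2^(j+1) := by positivity
  have ha0 : 0 ≤ a := by positivity
  have hac : a < c := by
    rw [hc_def]; nlinarith [one_div_pos.2 hj1]
  have hsplit : (1:ℝ)/2^(j+1) < 1/2^j :=
    one_div_lt_one_div_of_lt hj (by rw [pow_succ]; nlinarith)
  have hba : b = a + 1/2^j := by rw [hb_def, ha_def, ← add_div]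
  have hcb : c < b := by rw [hba, hc_def]; linarith
  have hb1 : b ≤ 1 := by
    rw [hb_def, div_le_one hj]
    exact_mod_cast Nat.succ_le_of_lt hm
  have h2 : (2:ℝ)^(j+1) = 2*2^j := by ring
  have hhalf : (1:ℝ)/2^j - 1/2^(j+1) = 1/2^(j+1) := by
    rw [h2]; field_simp; ring
  have hbc : b - c = 1/2^(j+1) := by
    rw [hba, hc_def]; linarith
  have hcx : c = (2*(m:ℝ)+1)/2^(j+1) := by
    rw [hc_def, h2]; field_simp; try ring
  have hca : c = a + 1/2^(j+1) := by rw [ha_def]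
  have hx2 : (1:ℝ)/2^(j+1) * (2^(j+1)*x) = x := by field_simp
  -- rewrite the integrand
  have hInd : ∀ t : ℝ, Set.indicator (Set.Ico (0:ℝ) t) (fun _ => (1:ℝ)) x * haarFn j m t
      = haarFn j m t - Set.indicator {s : ℝ | s ≤ x} (haarFn j m) t := by
    intro t
    by_cases h : x < t
    · simp [Set.indicator_apply, hx0, h, not_le.2 h]
    · simp [Set.indicator_apply, h, not_lt.1 h]
  have hIic : IntervalIntegrable (Set.indicator {s : ℝ | s ≤ x} (haarFn j m)) volume 0 1 := by
    rw [intervalIntegrable_iff, Set.uIoc_of_le (zero_le_one' ℝ)]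
    exact (haar_intble j m 0 1).1.indicator measurableSet_Iic
  have key : ∫ t in (0:ℝ)..1, Set.indicator (Set.Ico (0:ℝ) t) (fun _ => (1:ℝ)) x * haarFn j m t
      = (∫ t in (0:ℝ)..1, haarFn j m t) - ∫ t in (0:ℝ)..x, haarFn j m t := by
    simp_rw [hInd]
    rw [intervalIntegral.integral_sub (haar_intble j m 0 1) hIic,
      intervalIntegral.integral_indicator (Set.mem_Icc.2 ⟨hx0, le_of_lt hx1⟩)]
  have h01 : ∫ t in (0:ℝ)..1, haarFn j m t = 0 := by
    rw [haar_integral j m 0 1 zero_le_one]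
    rw [min_eq_left (by linarith), min_eq_left hb1, max_eq_left ha0,
      max_eq_left (by linarith : (0:ℝ) ≤ c),
      max_eq_left (by linarith : (0:ℝ) ≤ c - a),
      max_eq_left (by linarith : (0:ℝ) ≤ b - c), hbc, hc_def]
    ring
  rw [key, h01, zero_sub]
  constructor
  · rintro ⟨hax, hxb⟩
    rw [haar_integral j m 0 x hx0, max_eq_left ha0,
      max_eq_left (by linarith : (0:ℝ) ≤ c)]
    rcases le_or_gt x c with hxc | hxc
    · rw [min_eq_right hxc, min_eq_right (by linarith : x ≤ b),
        max_eq_left (by linarith : (0:ℝ) ≤ x - a),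
        max_eq_right (by linarith : x - c ≤ 0),
        abs_of_nonneg (by rw [hcx] at hxc; nlinarith [(le_div_iff₀ hj1).1 hxc] :
          (0:ℝ) ≤ 2*(m:ℝ)+1 - 2^(j+1)*x)]
      linear_combination hcx - hca + hx2
    · rw [min_eq_left (le_of_lt hxc), min_eq_right (le_of_lt hxb),
        max_eq_left (by linarith : (0:ℝ) ≤ c - a),
        max_eq_left (by linarith : (0:ℝ) ≤ x - c),
        abs_of_nonpos (by rw [hcx] at hxc; nlinarith [(div_lt_iff₀ hj1).1 hxc] :
          2*(m:ℝ)+1 - 2^(j+1)*x ≤ 0)]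
      linear_combination (-1:ℝ)*hcx - hca - hx2
  · intro h
    have hcase : x ≤ a ∨ b ≤ x := by
      rcases h with h | h
      · simp only [Set.mem_Ico, not_and, not_lt] at h
        rcases le_or_gt x a with h' | h'
        · exact Or.inl h'
        · exact Or.inr (h h'.le)
      · exact Or.inl (le_of_eq h)
    rw [haar_integral j m 0 x hx0, max_eq_left ha0,
      max_eq_left (by linarith : (0:ℝ) ≤ c)]
    rcases hcase with hxa | hbx
    · rw [min_eq_right (by linarith : x ≤ c), min_eq_right (by linarith : x ≤ b),
        max_eq_right (by linarith : x - a ≤ 0),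
        max_eq_right (by linarith : x - c ≤ 0)]
      ring
    · rw [min_eq_left (by linarith : c ≤ x), min_eq_left hbx,
        max_eq_left (by linarith : (0:ℝ) ≤ c - a),
        max_eq_left (by linarith : (0:ℝ) ≤ b - c), hbc, hc_def]
      ring
end

section
/- For a finite point set (x_n)_{n=0}^{N-1} in [0,1) with all x_n ≠ m/2^j, the Haar coefficient of the counting part g(t) = (1/N)∑_{n=0}^{N-1} 1_{[0,t)}(x_n) equals (2^{−j−1}/N) ∑_{n: x_n ∈ (m/2^j,(m+1)/2^j)} (|2m+1 − 2^{j+1} x_n| − 1). -/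
open MeasureTheory Finset

lemma intInd {u v : ℝ} (huv : u ≤ v) {s : Set ℝ} (hs : MeasurableSet s) (c : ℝ) :
    ∫ t in u..v, s.indicator (fun _ => c) t = c * (volume (Set.Ioc u v ∩ s)).toReal := by
  rw [intervalIntegral.integral_of_le huv, setIntegral_indicator hs, setIntegral_const]
  rw [smul_eq_mul, mul_comm]
  rfl

lemma indIntble {u v : ℝ} {s : Set ℝ} (hs : MeasurableSet s) (c : ℝ) :
    IntervalIntegrable (s.indicator (fun _ => c)) volume u v := by
  rw [intervalIntegrable_iff]
  exact (integrableOn_const measure_Ioc_lt_top.ne).indicator hs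

lemma pt_decomp (j m : ℕ) (y t : ℝ) (hy0 : 0 ≤ y) :
    Set.indicator (Set.Ico (0:ℝ) t) (fun _ => (1:ℝ)) y * haarFn j m t
      = Set.indicator (Set.Ioi y ∩ Set.Ico ((m:ℝ)/2^j) ((m:ℝ)/2^j + 1/2^(j+1))) (fun _ => (1:ℝ)) t
        + Set.indicator (Set.Ioi y ∩ Set.Ico ((m:ℝ)/2^j + 1/2^(j+1)) (((m:ℝ)+1)/2^j)) (fun _ => (-1:ℝ)) t := by
  simp only [haarFn, Set.indicator, Set.mem_Ico, Set.mem_Ioi, Set.mem_inter_iff]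
  split_ifs
  all_goals (first | ring1 | (exfalso; try casesm* _ ∧ _; first | tauto | linarith))

lemma pt_integral (j m : ℕ) (hm : m < 2^j) (y : ℝ) (hy0 : 0 ≤ y) (hy1 : y < 1)
    (hya : y ≠ (m:ℝ)/2^j) :
    ∫ t in (0:ℝ)..1, Set.indicator (Set.Ico (0:ℝ) t) (fun _ => (1:ℝ)) y * haarFn j m t
      = if y ∈ Set.Ioo ((m:ℝ)/2^j) (((m:ℝ)+1)/2^j)
        then |((m:ℝ)/2^j + 1/2^(j+1)) - y| - 1/2^(j+1) else 0 := by
  have h2j : (0:ℝ) < 2^j := by positivity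
  have hε : (0:ℝ) < 1/2^(j+1) := by positivity
  have ha0 : (0:ℝ) ≤ (m:ℝ)/2^j := by positivity
  have hc2 : ((m:ℝ)+1)/2^j = (m:ℝ)/2^j + 2*(1/2^(j+1)) := by
    rw [pow_succ]; field_simp
  have hc1 : ((m:ℝ)+1)/2^j ≤ 1 := by
    rw [div_le_one h2j]
    have : (m:ℝ)+1 ≤ (2:ℝ)^j := by exact_mod_cast Nat.succ_le_of_lt hm
    linarith
  have hmeas1 : MeasurableSet (Set.Ioi y ∩ Set.Ico ((m:ℝ)/2^j) ((m:ℝ)/2^j + 1/2^(j+1))) :=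
    measurableSet_Ioi.inter measurableSet_Ico
  have hmeas2 : MeasurableSet (Set.Ioi y ∩ Set.Ico ((m:ℝ)/2^j + 1/2^(j+1)) (((m:ℝ)+1)/2^j)) :=
    measurableSet_Ioi.inter measurableSet_Ico
  simp_rw [pt_decomp j m y _ hy0]
  rw [intervalIntegral.integral_add (indIntble hmeas1 1) (indIntble hmeas2 (-1)),
    intInd (by norm_num) hmeas1, intInd (by norm_num) hmeas2]
  set a := (m:ℝ)/2^j with hadef
  set ε := (1:ℝ)/2^(j+1) with hedef
  by_cases hyc : ((m:ℝ)+1)/2^j ≤ y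
  · have e1 : Set.Ioc (0:ℝ) 1 ∩ (Set.Ioi y ∩ Set.Ico a (a + ε)) = ∅ := by
      rw [Set.eq_empty_iff_forall_notMem]
      intro t ht
      simp only [Set.mem_inter_iff, Set.mem_Ioc, Set.mem_Ioi, Set.mem_Ico] at ht
      casesm* _ ∧ _; linarith
    have e2 : Set.Ioc (0:ℝ) 1 ∩ (Set.Ioi y ∩ Set.Ico (a + ε) (((m:ℝ)+1)/2^j)) = ∅ := by
      rw [Set.eq_empty_iff_forall_notMem]
      intro t ht
      simp only [Set.mem_inter_iff, Set.mem_Ioc, Set.mem_Ioi, Set.mem_Ico] at ht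
      casesm* _ ∧ _; linarith
    rw [e1, e2, if_neg (by simp only [Set.mem_Ioo]; push_neg; intro _; linarith)]
    simp
  push_neg at hyc
  by_cases hyb : a + ε ≤ y
  · have e1 : Set.Ioc (0:ℝ) 1 ∩ (Set.Ioi y ∩ Set.Ico a (a + ε)) = ∅ := by
      rw [Set.eq_empty_iff_forall_notMem]
      intro t ht
      simp only [Set.mem_inter_iff, Set.mem_Ioc, Set.mem_Ioi, Set.mem_Ico] at ht
      casesm* _ ∧ _; linarith
    have e2 : Set.Ioc (0:ℝ) 1 ∩ (Set.Ioi y ∩ Set.Ico (a + ε) (((m:ℝ)+1)/2^j))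
        = Set.Ioo y (((m:ℝ)+1)/2^j) := by
      ext t
      simp only [Set.mem_inter_iff, Set.mem_Ioc, Set.mem_Ioi, Set.mem_Ico, Set.mem_Ioo]
      constructor
      · intro ht; casesm* _ ∧ _; and_intros <;> linarith
      · intro ht; casesm* _ ∧ _; and_intros <;> linarith
    rw [e1, e2, Real.volume_Ioo, if_pos (by constructor <;> linarith)]
    rw [ENNReal.toReal_ofReal (by linarith), abs_of_nonpos (by linarith)]
    simp only [measure_empty, ENNReal.toReal_zero]
    linarith
  push_neg at hyb
  by_cases hya' : a < y
  · have e1 : Set.Ioc (0:ℝ) 1 ∩ (Set.Ioi y ∩ Set.Ico a (a + ε)) = Set.Ioo y (a + ε) := by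
      ext t
      simp only [Set.mem_inter_iff, Set.mem_Ioc, Set.mem_Ioi, Set.mem_Ico, Set.mem_Ioo]
      constructor
      · intro ht; casesm* _ ∧ _; and_intros <;> linarith
      · intro ht; casesm* _ ∧ _; and_intros <;> linarith
    have e2 : Set.Ioc (0:ℝ) 1 ∩ (Set.Ioi y ∩ Set.Ico (a + ε) (((m:ℝ)+1)/2^j))
        = Set.Ico (a + ε) (((m:ℝ)+1)/2^j) := by
      ext t
      simp only [Set.mem_inter_iff, Set.mem_Ioc, Set.mem_Ioi, Set.mem_Ico]
      constructor
      · intro ht; casesm* _ ∧ _; and_intros <;> linarith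
      · intro ht; casesm* _ ∧ _; and_intros <;> linarith
    rw [e1, e2, Real.volume_Ioo, Real.volume_Ico, if_pos (by constructor <;> linarith)]
    rw [ENNReal.toReal_ofReal (by linarith), ENNReal.toReal_ofReal (by linarith),
      abs_of_pos (by linarith)]
    linarith
  · push_neg at hya'
    have hya'' : y < a := lt_of_le_of_ne hya' hya
    have e1 : Set.Ioc (0:ℝ) 1 ∩ (Set.Ioi y ∩ Set.Ico a (a + ε)) = Set.Ico a (a + ε) := by
      ext t
      simp only [Set.mem_inter_iff, Set.mem_Ioc, Set.mem_Ioi, Set.mem_Ico]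
      constructor
      · intro ht; casesm* _ ∧ _; and_intros <;> linarith
      · intro ht; casesm* _ ∧ _; and_intros <;> linarith
    have e2 : Set.Ioc (0:ℝ) 1 ∩ (Set.Ioi y ∩ Set.Ico (a + ε) (((m:ℝ)+1)/2^j))
        = Set.Ico (a + ε) (((m:ℝ)+1)/2^j) := by
      ext t
      simp only [Set.mem_inter_iff, Set.mem_Ioc, Set.mem_Ioi, Set.mem_Ico]
      constructor
      · intro ht; casesm* _ ∧ _; and_intros <;> linarith
      · intro ht; casesm* _ ∧ _; and_intros <;> linarith
    rw [e1, e2, Real.volume_Ico, Real.volume_Ico,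
      if_neg (by simp only [Set.mem_Ioo]; push_neg; intro h'; linarith)]
    rw [ENNReal.toReal_ofReal (by linarith), ENNReal.toReal_ofReal (by linarith)]
    ring

open Classical in
theorem haarCoeff_counting_part (N j m : ℕ) (hN : 0 < N) (hm : m < 2^j)
    (x : ℕ → ℝ) (hx : ∀ n < N, x n ∈ Set.Ico (0:ℝ) 1)
    (hne : ∀ n < N, x n ≠ (m:ℝ)/2^j) :
    ∫ t in (0:ℝ)..1,
        ((∑ n ∈ Finset.range N, Set.indicator (Set.Ico (0:ℝ) t) (fun _ => (1:ℝ)) (x n)) / N)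
          * haarFn j m t
      = (1/2^(j+1)) / N *
          ∑ n ∈ Finset.range N,
            if x n ∈ Set.Ioo ((m:ℝ)/2^j) (((m:ℝ)+1)/2^j)
            then |2*(m:ℝ)+1 - 2^(j+1)*(x n)| - 1 else 0 := by
  have hε : (0:ℝ) < 1/2^(j+1) := by positivity
  have key : ∀ n ∈ Finset.range N, IntervalIntegrable
      (fun t => Set.indicator (Set.Ico (0:ℝ) t) (fun _ => (1:ℝ)) (x n) * haarFn j m t)
      volume (0:ℝ) 1 := by
    intro n hn
    have hx0 := (hx n (mem_range.1 hn)).1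
    have heq : (fun t => Set.indicator (Set.Ico (0:ℝ) t) (fun _ => (1:ℝ)) (x n) * haarFn j m t)
        = fun t => Set.indicator (Set.Ioi (x n) ∩ Set.Ico ((m:ℝ)/2^j) ((m:ℝ)/2^j + 1/2^(j+1)))
              (fun _ => (1:ℝ)) t
            + Set.indicator (Set.Ioi (x n) ∩ Set.Ico ((m:ℝ)/2^j + 1/2^(j+1)) (((m:ℝ)+1)/2^j))
              (fun _ => (-1:ℝ)) t :=
      funext fun t => pt_decomp j m (x n) t hx0
    rw [heq]
    exact (indIntble (measurableSet_Ioi.inter measurableSet_Ico) 1).add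
      (indIntble (measurableSet_Ioi.inter measurableSet_Ico) (-1))
  have step1 : ∀ t : ℝ,
      ((∑ n ∈ Finset.range N, Set.indicator (Set.Ico (0:ℝ) t) (fun _ => (1:ℝ)) (x n)) / N)
        * haarFn j m t
      = (N:ℝ)⁻¹ * ∑ n ∈ Finset.range N,
          Set.indicator (Set.Ico (0:ℝ) t) (fun _ => (1:ℝ)) (x n) * haarFn j m t := by
    intro t
    rw [div_mul_eq_mul_div, Finset.sum_mul, div_eq_inv_mul]
  simp_rw [step1]
  rw [intervalIntegral.integral_const_mul, intervalIntegral.integral_finset_sum key]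
  have step2 : ∀ n ∈ Finset.range N,
      (∫ t in (0:ℝ)..1, Set.indicator (Set.Ico (0:ℝ) t) (fun _ => (1:ℝ)) (x n) * haarFn j m t)
      = (1/2^(j+1)) * (if x n ∈ Set.Ioo ((m:ℝ)/2^j) (((m:ℝ)+1)/2^j)
          then |2*(m:ℝ)+1 - 2^(j+1)*(x n)| - 1 else 0) := by
    intro n hn
    have hn' := mem_range.1 hn
    rw [pt_integral j m hm (x n) (hx n hn').1 (hx n hn').2 (hne n hn')]
    by_cases hmem : x n ∈ Set.Ioo ((m:ℝ)/2^j) (((m:ℝ)+1)/2^j)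
    · rw [if_pos hmem, if_pos hmem, mul_sub, mul_one]
      have habs : (1/2^(j+1) : ℝ) * |2*(m:ℝ)+1 - 2^(j+1)*(x n)|
          = |(m:ℝ)/2^j + 1/2^(j+1) - x n| := by
        rw [show (1/2^(j+1) : ℝ) * |2*(m:ℝ)+1 - 2^(j+1)*(x n)|
            = |(1/2^(j+1) : ℝ) * (2*(m:ℝ)+1 - 2^(j+1)*(x n))| by
          rw [abs_mul, abs_of_pos hε]]
        congr 1
        rw [pow_succ]
        field_simp
      rw [habs]
    · rw [if_neg hmem, if_neg hmem, mul_zero]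
  rw [Finset.sum_congr rfl step2, ← Finset.mul_sum]
  ring
end

section
/- For every p ∈ (1, ∞) there exists a constant C_p > 0 such that the L_p-discrepancy of the first N terms of the symmetrized van der Corput sequence satisfies L_{p,N} ≤ C_p √(log N)/N for all N ≥ 2. -/
open MeasureTheory Finset

set_option maxHeartbeats 2000000

namespace VdC

lemma radInv_eq (m L : ℕ) (h : m ≤ L) :
    radInv m = ∑ i ∈ Finset.range L, if m.testBit i then (1:ℝ)/2^(i+1) else 0 := by
  unfold radInv
  refine Finset.sum_subset (Finset.range_subset_range.2 h) ?_
  intro i hi hni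
  simp only [Finset.mem_range, not_lt] at hni
  have : m.testBit i = false :=
    Nat.testBit_eq_false_of_lt (lt_of_lt_of_le (Nat.lt_two_pow_self : m < 2^m) (Nat.pow_le_pow_right (by norm_num) hni))
  simp [this]

lemma radInv_zero : radInv 0 = 0 := by simp [radInv]

lemma radInv_bit (m : ℕ) :
    radInv m = (if m % 2 = 1 then (1:ℝ)/2 else 0) + radInv (m / 2) / 2 := by
  rw [radInv_eq m (m+1) (Nat.le_succ m), Finset.sum_range_succ']
  have hA : (∑ k ∈ Finset.range m, if m.testBit (k+1) then (1:ℝ)/2^(k+1+1) else 0)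
      = radInv (m/2) / 2 := by
    rw [radInv_eq (m/2) m (Nat.div_le_self m 2), Finset.sum_div]
    refine Finset.sum_congr rfl fun i _ => ?_
    rw [Nat.testBit_add_one]
    by_cases hb : (m/2).testBit i
    · simp only [hb, if_true]; ring
    · simp [hb]
  have hB : (if m.testBit 0 then (1:ℝ)/2^(0+1) else 0) = if m % 2 = 1 then (1:ℝ)/2 else 0 := by
    by_cases h : m % 2 = 1 <;> simp [Nat.testBit_zero, h]
  rw [hA, hB, add_comm]

lemma radInv_two_mul (q : ℕ) : radInv (2*q) = radInv q / 2 := by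
  rw [radInv_bit (2*q)]
  simp [Nat.mul_div_cancel_left, Nat.mul_mod_right]

lemma radInv_two_mul_add_one (q : ℕ) : radInv (2*q+1) = 1/2 + radInv q / 2 := by
  rw [radInv_bit (2*q+1)]
  have h1 : (2*q+1) % 2 = 1 := by omega
  have h2 : (2*q+1) / 2 = q := by omega
  simp [h1, h2]

lemma radInv_nonneg (m : ℕ) : 0 ≤ radInv m := by
  apply Finset.sum_nonneg
  intro i _
  split <;> positivity

lemma radInv_le {l q : ℕ} (hq : q < 2^l) : radInv q ≤ 1 - ((2:ℝ)^l)⁻¹ := by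
  induction l generalizing q with
  | zero =>
    interval_cases q
    simp [radInv_zero]
  | succ l ih =>
    have hq2 : q / 2 < 2^l := by
      have := Nat.div_lt_div_of_lt_of_dvd (by omega : (2:ℕ) ∣ 2^(l+1)) hq
      simpa [Nat.pow_succ, Nat.mul_div_cancel] using Nat.div_lt_of_lt_mul (by rw [pow_succ] at hq; omega)
    have h := ih hq2
    rw [radInv_bit q]
    have : ((2:ℝ)^(l+1))⁻¹ = ((2:ℝ)^l)⁻¹ / 2 := by
      rw [pow_succ]; field_simp
    rw [this]
    split <;> nlinarith [radInv_nonneg (q/2)]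

lemma radInv_lt_one (m : ℕ) : radInv m < 1 := by
  have := radInv_le (Nat.lt_two_pow_self : m < 2^m)
  have : (0:ℝ) < ((2:ℝ)^m)⁻¹ := by positivity
  linarith [radInv_le (Nat.lt_two_pow_self : m < 2^m)]

lemma radInv_sep {l q q' : ℕ} (hq : q < 2^l) (hq' : q' < 2^l) (hne : q ≠ q') :
    ((2:ℝ)^l)⁻¹ ≤ |radInv q - radInv q'| := by
  induction l generalizing q q' with
  | zero => interval_cases q <;> interval_cases q' <;> simp_all
  | succ l ih =>
    have hq2 : q / 2 < 2^l := by rw [pow_succ] at hq; omega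
    have hq2' : q' / 2 < 2^l := by rw [pow_succ] at hq'; omega
    rw [radInv_bit q, radInv_bit q']
    have hpow : ((2:ℝ)^(l+1))⁻¹ = ((2:ℝ)^l)⁻¹ / 2 := by rw [pow_succ]; field_simp
    by_cases hb : q % 2 = q' % 2
    · have hne2 : q / 2 ≠ q' / 2 := by
        intro h; apply hne; omega
      have := ih hq2 hq2' hne2
      have heq : (if q % 2 = 1 then (1:ℝ)/2 else 0) = (if q' % 2 = 1 then (1:ℝ)/2 else 0) := by
        rw [hb]
      rw [hpow, heq]
      rw [show (if q' % 2 = 1 then (1:ℝ)/2 else 0) + radInv (q/2)/2 -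
          ((if q' % 2 = 1 then (1:ℝ)/2 else 0) + radInv (q'/2)/2)
          = (radInv (q/2) - radInv (q'/2))/2 from by ring, abs_div, abs_two]
      linarith
    · have hub := radInv_le hq2
      have hub' := radInv_le hq2'
      have hlb := radInv_nonneg (q/2)
      have hlb' := radInv_nonneg (q'/2)
      have hpos : (0:ℝ) < ((2:ℝ)^l)⁻¹ := by positivity
      rw [hpow]
      rcases Nat.mod_two_eq_zero_or_one q with h0 | h1
      · have h1' : q' % 2 = 1 := by omega
        rw [abs_sub_comm]
        simp only [h0, h1']
        norm_num
        rw [abs_of_nonneg (by linarith)]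
        linarith
      · have h0' : q' % 2 = 0 := by omega
        simp only [h1, h0']
        norm_num
        rw [abs_of_nonneg (by linarith)]
        linarith

lemma radInv_pow_add {l r : ℕ} (hr : r < 2^l) :
    radInv (2^l + r) = ((2:ℝ)^(l+1))⁻¹ + radInv r := by
  induction l generalizing r with
  | zero =>
    interval_cases r
    rw [show (2^0 + 0 : ℕ) = 1 from rfl, radInv_bit 1]
    norm_num [radInv_zero]
  | succ l ih =>
    have hmod : (2^(l+1) + r) % 2 = r % 2 := by
      have : 2^(l+1) % 2 = 0 := by
        simp [Nat.pow_succ, Nat.mul_mod_left]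
      omega
    have hdiv : (2^(l+1) + r) / 2 = 2^l + r/2 := by
      rw [pow_succ] at *
      omega
    have hr2 : r / 2 < 2^l := by rw [pow_succ] at hr; omega
    rw [radInv_bit (2^(l+1)+r), hmod, hdiv, ih hr2, radInv_bit r]
    have : ((2:ℝ)^(l+1+1))⁻¹ = ((2:ℝ)^(l+1))⁻¹/2 := by rw [pow_succ]; field_simp
    rw [this]
    ring

lemma sum_range_two_mul {M : Type*} [AddCommMonoid M] (n : ℕ) (f : ℕ → M) :
    ∑ i ∈ Finset.range (2*n), f i = ∑ m ∈ Finset.range n, (f (2*m) + f (2*m+1)) := by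
  induction n with
  | zero => simp
  | succ n ih =>
    have : 2*(n+1) = (2*n+1)+1 := by ring
    rw [this, Finset.sum_range_succ, Finset.sum_range_succ, ih, Finset.sum_range_succ]
    abel

lemma sum_range_add'' {M : Type*} [AddCommMonoid M] (a b : ℕ) (f : ℕ → M) :
    ∑ i ∈ Finset.range (a+b), f i = ∑ i ∈ Finset.range a, f i + ∑ i ∈ Finset.range b, f (a+i) := by
  induction b with
  | zero => simp
  | succ b ih => rw [← Nat.add_assoc, Finset.sum_range_succ, ih, Finset.sum_range_succ]; abel

lemma sum_radInv_grid (l : ℕ) (f : ℝ → ℝ) :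
    ∑ q ∈ Finset.range (2^l), f (radInv q) = ∑ q ∈ Finset.range (2^l), f ((q:ℝ) / 2^l) := by
  induction l generalizing f with
  | zero => simp [radInv_zero]
  | succ l ih =>
    have e1 : ∑ q ∈ Finset.range (2^(l+1)), f (radInv q)
        = ∑ q ∈ Finset.range (2^l), (f (radInv q / 2) + f (1/2 + radInv q / 2)) := by
      rw [show (2:ℕ)^(l+1) = 2*2^l by ring, sum_range_two_mul]
      exact Finset.sum_congr rfl fun q _ => by rw [radInv_two_mul, radInv_two_mul_add_one]
    have A := ih (fun x => f (x/2))
    have B := ih (fun x => f (1/2 + x/2))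
    rw [e1, Finset.sum_add_distrib, A, B, ← Finset.sum_add_distrib]
    have e2 : ∑ q ∈ Finset.range (2^(l+1)), f ((q:ℝ) / 2^(l+1))
        = ∑ q ∈ Finset.range (2^l), (f ((q:ℝ)/2^(l+1)) + f (((2^l + q : ℕ):ℝ)/2^(l+1))) := by
      rw [show (2:ℕ)^(l+1) = 2^l + 2^l by ring, sum_range_add'', ← Finset.sum_add_distrib]
    rw [e2]
    refine Finset.sum_congr rfl fun q hq => ?_
    congr 1
    · congr 1
      rw [div_div, ← pow_succ]
    · congr 1
      push_cast
      rw [div_div, ← pow_succ]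
      rw [div_add_div _ _ (by norm_num : (2:ℝ) ≠ 0) (by positivity : ((2:ℝ)^(l+1)) ≠ 0)]
      rw [div_eq_div_iff (by positivity) (by positivity)]
      push_cast
      ring


noncomputable def ind (x t : ℝ) : ℝ := if x < t then 1 else 0

lemma ind_mono (x : ℝ) : Monotone (ind x) := by
  intro t u htu
  unfold ind
  split <;> split <;> simp_all <;> linarith

lemma ind_nonneg (x t : ℝ) : 0 ≤ ind x t := by unfold ind; split <;> norm_num

lemma ind_le_one (x t : ℝ) : ind x t ≤ 1 := by unfold ind; split <;> norm_num

lemma ind_intble (x a b : ℝ) : IntervalIntegrable (ind x) volume a b :=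
  (ind_mono x).intervalIntegrable

lemma ind_meas (x : ℝ) : Measurable (ind x) := by
  unfold ind
  exact Measurable.ite measurableSet_Ioi measurable_const measurable_const

lemma integral_ind (x a b : ℝ) (hab : a ≤ b) :
    ∫ t in a..b, ind x t = b - max a (min b x) := by
  rcases le_or_gt b x with hbx | hxb
  · rw [min_eq_left hbx, max_eq_right hab]
    rw [intervalIntegral.integral_congr_ae (g := fun _ => (0:ℝ)) ?_]
    · simp
    · filter_upwards with t ht
      rw [Set.uIoc_of_le hab] at ht
      have : ¬ x < t := by push_neg; exact le_trans ht.2 hbx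
      simp [ind, this]
  · rcases lt_or_ge x a with hxa | hax
    · rw [min_eq_right hxb.le, max_eq_left hxa.le]
      rw [intervalIntegral.integral_congr_ae (g := fun _ => (1:ℝ)) ?_]
      · simp
      · filter_upwards with t ht
        rw [Set.uIoc_of_le hab] at ht
        have : x < t := lt_of_lt_of_le hxa ht.1.le
        simp [ind, this]
    · rw [min_eq_right hxb.le, max_eq_right hax]
      have h1 : ∫ t in a..x, ind x t = 0 := by
        rw [intervalIntegral.integral_congr_ae (g := fun _ => (0:ℝ)) ?_]
        · simp
        · filter_upwards with t ht
          rw [Set.uIoc_of_le hax] at ht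
          have : ¬ x < t := by push_neg; exact ht.2
          simp [ind, this]
      have h2 : ∫ t in x..b, ind x t = b - x := by
        rw [intervalIntegral.integral_congr_ae (g := fun _ => (1:ℝ)) ?_]
        · simp
        · filter_upwards with t ht
          rw [Set.uIoc_of_le hxb.le] at ht
          simp [ind, ht.1]
      rw [← intervalIntegral.integral_add_adjacent_intervals (ind_intble x a x) (ind_intble x x b),
        h1, h2, zero_add]

noncomputable def FF (n : ℕ) (ε : ℝ) (t : ℝ) : ℝ :=
  (∑ r ∈ Finset.range n, (ind (ε + radInv r) t + ind (1 - ε - radInv r) t)) - 2*n*t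

lemma FF_meas (n : ℕ) (ε : ℝ) : Measurable (FF n ε) := by
  unfold FF
  apply Measurable.sub
  · exact Finset.measurable_sum _ (fun r _ => ((ind_meas _).add (ind_meas _)))
  · exact (measurable_const.mul measurable_id)

lemma FFsum_intble (n : ℕ) (ε : ℝ) (a b : ℝ) :
    IntervalIntegrable (fun t => ∑ r ∈ Finset.range n,
      (ind (ε + radInv r) t + ind (1 - ε - radInv r) t)) volume a b := by
  have h := IntervalIntegrable.sum (f := fun r t => ind (ε + radInv r) t + ind (1 - ε - radInv r) t)
    (Finset.range n) (fun r _ => (ind_intble _ a b).add (ind_intble _ a b))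
  have he : (∑ i ∈ Finset.range n, fun t => ind (ε + radInv i) t + ind (1 - ε - radInv i) t)
      = fun t => ∑ r ∈ Finset.range n, (ind (ε + radInv r) t + ind (1 - ε - radInv r) t) := by
    funext t
    simp [Finset.sum_apply]
  rwa [he] at h

lemma FF_intble (n : ℕ) (ε : ℝ) (a b : ℝ) : IntervalIntegrable (FF n ε) volume a b := by
  unfold FF
  apply IntervalIntegrable.sub
  · exact FFsum_intble n ε a b
  · exact (continuous_const.mul continuous_id).intervalIntegrable a b

lemma FF_bound (n : ℕ) (ε : ℝ) (t : ℝ) (h0 : 0 ≤ t) (h1 : t ≤ 1) : |FF n ε t| ≤ 4*n := by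
  unfold FF
  have hs : ∀ r ∈ Finset.range n, ind (ε + radInv r) t + ind (1 - ε - radInv r) t ≤ 2 := by
    intro r _
    linarith [ind_le_one (ε + radInv r) t, ind_le_one (1 - ε - radInv r) t]
  have hs0 : (0:ℝ) ≤ ∑ r ∈ Finset.range n, (ind (ε + radInv r) t + ind (1 - ε - radInv r) t) :=
    Finset.sum_nonneg fun r _ => by linarith [ind_nonneg (ε + radInv r) t, ind_nonneg (1 - ε - radInv r) t]
  have hs2 : ∑ r ∈ Finset.range n, (ind (ε + radInv r) t + ind (1 - ε - radInv r) t)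
      ≤ ∑ r ∈ Finset.range n, (2:ℝ) := Finset.sum_le_sum hs
  rw [Finset.sum_const, Finset.card_range] at hs2
  rw [nsmul_eq_mul] at hs2
  rw [abs_le]
  constructor
  · nlinarith [Nat.cast_nonneg (α := ℝ) n]
  · nlinarith [Nat.cast_nonneg (α := ℝ) n]

lemma sum_grid_J (l i : ℕ) (hi : i < 2^l) (θ : ℝ) (h0 : 0 ≤ θ) (hθ : θ ≤ ((2:ℝ)^l)⁻¹) :
    ∑ q ∈ Finset.range (2^l),
      (((i:ℝ)+1)*((2:ℝ)^l)⁻¹ - max ((i:ℝ)*((2:ℝ)^l)⁻¹)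
        (min (((i:ℝ)+1)*((2:ℝ)^l)⁻¹) ((q:ℝ)*((2:ℝ)^l)⁻¹ + θ)))
    = (i:ℝ)*((2:ℝ)^l)⁻¹ + (((2:ℝ)^l)⁻¹ - θ) := by
  set h : ℝ := ((2:ℝ)^l)⁻¹ with hh
  have hpos : 0 < h := by rw [hh]; positivity
  have key : ∀ q ∈ Finset.range (2^l),
      (((i:ℝ)+1)*h - max ((i:ℝ)*h) (min (((i:ℝ)+1)*h) ((q:ℝ)*h + θ)))
      = if q < i then h else if q = i then h - θ else 0 := by
    intro q _
    rcases lt_trichotomy q i with hqi | hqi | hqi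
    · have hx : (q:ℝ)*h + θ ≤ (i:ℝ)*h := by
        have : ((q:ℝ)+1) ≤ (i:ℝ) := by exact_mod_cast hqi
        nlinarith
      have hxb : (q:ℝ)*h + θ ≤ ((i:ℝ)+1)*h := by nlinarith
      rw [min_eq_right hxb, max_eq_left hx, if_pos hqi]
      ring
    · subst hqi
      have hxa : (q:ℝ)*h ≤ (q:ℝ)*h + θ := by linarith
      have hxb : (q:ℝ)*h + θ ≤ ((q:ℝ)+1)*h := by nlinarith
      rw [min_eq_right hxb, max_eq_right hxa, if_neg (lt_irrefl q), if_pos rfl]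
      ring
    · have hx : ((i:ℝ)+1)*h ≤ (q:ℝ)*h + θ := by
        have : ((i:ℝ)+1) ≤ (q:ℝ) := by exact_mod_cast hqi
        nlinarith
      rw [min_eq_left hx, max_eq_right (by nlinarith : (i:ℝ)*h ≤ ((i:ℝ)+1)*h)]
      rw [if_neg (by omega), if_neg (by omega)]
      ring
  rw [Finset.sum_congr rfl key]
  have hsub : ∑ q ∈ Finset.range (2^l), (if q < i then h else if q = i then h - θ else 0)
      = ∑ q ∈ Finset.range (i+1), (if q < i then h else if q = i then h - θ else 0) := by
    symm
    apply Finset.sum_subset (Finset.range_subset_range.2 (by omega))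
    intro q _ hq
    simp only [Finset.mem_range, not_lt] at hq
    rw [if_neg (by omega), if_neg (by omega)]
  rw [hsub, Finset.sum_range_succ, if_neg (lt_irrefl i), if_pos rfl]
  have : ∑ q ∈ Finset.range i, (if q < i then h else if q = i then h - θ else 0)
      = ∑ q ∈ Finset.range i, h := by
    refine Finset.sum_congr rfl fun q hq => ?_
    rw [if_pos (Finset.mem_range.1 hq)]
  rw [this, Finset.sum_const, Finset.card_range, nsmul_eq_mul]


lemma integral_FF_top_atom (l i : ℕ) (hi : i < 2^l) (ε : ℝ) (hε0 : 0 ≤ ε)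
    (hε : ε ≤ ((2:ℝ)^l)⁻¹) :
    ∫ t in ((i:ℝ)*((2:ℝ)^l)⁻¹)..(((i:ℝ)+1)*((2:ℝ)^l)⁻¹), FF (2^l) ε t = 0 := by
  set h : ℝ := ((2:ℝ)^l)⁻¹ with hh
  have hpos : 0 < h := by rw [hh]; positivity
  set a : ℝ := (i:ℝ)*h with ha
  set b : ℝ := ((i:ℝ)+1)*h with hb
  have hab : a ≤ b := by rw [ha, hb]; nlinarith
  have hlin : IntervalIntegrable (fun t : ℝ => 2*((2^l:ℕ):ℝ)*t) volume a b := by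
    apply Continuous.intervalIntegrable
    continuity
  unfold FF
  rw [intervalIntegral.integral_sub (FFsum_intble (2^l) ε a b) hlin]
  rw [intervalIntegral.integral_finset_sum
      (fun r _ => (ind_intble (ε + radInv r) a b).add (ind_intble (1 - ε - radInv r) a b))]
  have hsum : ∑ r ∈ Finset.range (2^l),
      (∫ t in a..b, (ind (ε + radInv r) t + ind (1 - ε - radInv r) t))
      = ∑ r ∈ Finset.range (2^l),
        ((b - max a (min b (ε + radInv r))) + (b - max a (min b (1 - ε - radInv r)))) := by
    refine Finset.sum_congr rfl fun r _ => ?_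
    rw [intervalIntegral.integral_add (ind_intble _ a b) (ind_intble _ a b),
      integral_ind _ _ _ hab, integral_ind _ _ _ hab]
  rw [hsum, sum_radInv_grid l
    (fun x => (b - max a (min b (ε + x))) + (b - max a (min b (1 - ε - x))))]
  rw [Finset.sum_add_distrib]
  have hS1 : ∑ q ∈ Finset.range (2^l), (b - max a (min b (ε + (q:ℝ)/2^l)))
      = (i:ℝ)*h + (h - ε) := by
    have := sum_grid_J l i hi ε hε0 hε
    rw [← this]
    refine Finset.sum_congr rfl fun q _ => ?_
    rw [ha, hb, hh]
    congr 2
    rw [div_eq_mul_inv]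
    ring
  have hS2 : ∑ q ∈ Finset.range (2^l), (b - max a (min b (1 - ε - (q:ℝ)/2^l)))
      = (i:ℝ)*h + ε := by
    rw [← Finset.sum_range_reflect (fun q => b - max a (min b (1 - ε - (q:ℝ)/2^l))) (2^l)]
    have hcongr : ∀ q ∈ Finset.range (2^l),
        (b - max a (min b (1 - ε - ((2^l - 1 - q : ℕ):ℝ)/2^l)))
        = (b - max a (min b ((q:ℝ)*h + (h - ε)))) := by
      intro q hq
      have hq' : q < 2^l := Finset.mem_range.1 hq
      have hcast : ((2^l - 1 - q : ℕ):ℝ) = (2:ℝ)^l - 1 - q := by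
        have h1 : q ≤ 2^l - 1 := by omega
        have h2 : (1:ℕ) ≤ 2^l := Nat.one_le_two_pow
        rw [Nat.cast_sub h1, Nat.cast_sub h2]
        push_cast
        ring
      have harg : 1 - ε - ((2^l - 1 - q : ℕ):ℝ)/2^l = (q:ℝ)*h + (h - ε) := by
        rw [hcast, hh]
        field_simp
        ring
      rw [harg]
    rw [Finset.sum_congr rfl hcongr]
    rw [sum_grid_J l i hi (h - ε) (by linarith) (by rw [← hh]; linarith)]
    ring
  rw [hS1, hS2]
  have hlini : (∫ t in a..b, 2*((2^l:ℕ):ℝ)*t) = 2*((2^l:ℕ):ℝ)*((b^2 - a^2)/2) := by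
    rw [intervalIntegral.integral_const_mul]
    congr 1
    exact integral_id
  rw [hlini]
  have h2l : ((2^l:ℕ):ℝ) = h⁻¹ := by rw [hh]; push_cast; simp
  rw [h2l, ha, hb]
  field_simp
  ring


lemma sum_ind_diff_le {n l : ℕ} (hn : n ≤ 2^l) (pt : ℕ → ℝ)
    (hsep : ∀ r r', r < n → r' < n → r ≠ r' → ((2:ℝ)^l)⁻¹ ≤ |pt r - pt r'|)
    {t u : ℝ} (hut : u ≤ t) (hd : t - u ≤ ((2:ℝ)^l)⁻¹) :
    ∑ r ∈ Finset.range n, (ind (pt r) t - ind (pt r) u) ≤ 1 := by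
  have hpt : ∀ r ∈ Finset.range n, ind (pt r) t - ind (pt r) u
      = if u ≤ pt r ∧ pt r < t then (1:ℝ) else 0 := by
    intro r _
    unfold ind
    rcases lt_or_ge (pt r) u with h1 | h1
    · rw [if_pos (lt_of_lt_of_le h1 hut : pt r < t), if_pos (h1 : pt r < u),
        if_neg (fun hP => absurd hP.1 (not_le.2 h1) : ¬(u ≤ pt r ∧ pt r < t))]
      ring
    · rw [if_neg (not_lt.2 h1 : ¬ pt r < u)]
      rcases lt_or_ge (pt r) t with h2 | h2
      · rw [if_pos (h2 : pt r < t), if_pos (⟨h1, h2⟩ : u ≤ pt r ∧ pt r < t)]; ring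
      · rw [if_neg (not_lt.2 h2 : ¬ pt r < t),
          if_neg (fun hP => absurd hP.2 (not_lt.2 h2) : ¬(u ≤ pt r ∧ pt r < t))]
        ring
  rw [Finset.sum_congr rfl hpt, Finset.sum_boole]
  have hcard : (Finset.filter (fun r => u ≤ pt r ∧ pt r < t) (Finset.range n)).card ≤ 1 := by
    rw [Finset.card_le_one]
    intro r hr r' hr'
    simp only [Finset.mem_filter, Finset.mem_range] at hr hr'
    by_contra hne
    have hs := hsep r r' hr.1 hr'.1 hne
    have : |pt r - pt r'| < t - u := by
      rw [abs_sub_lt_iff]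
      constructor <;> linarith [hr.2.1, hr.2.2, hr'.2.1, hr'.2.2]
    linarith
  exact_mod_cast hcard

lemma sum_ind_diff_nonneg (n : ℕ) (pt : ℕ → ℝ) {t u : ℝ} (hut : u ≤ t) :
    0 ≤ ∑ r ∈ Finset.range n, (ind (pt r) t - ind (pt r) u) :=
  Finset.sum_nonneg fun r _ => by linarith [ind_mono (pt r) hut]

lemma FF_osc_aux {n l : ℕ} (hn : n ≤ 2^l) (ε a : ℝ) {t u : ℝ}
    (ht : t ∈ Set.Icc a (a + ((2:ℝ)^l)⁻¹)) (hu : u ∈ Set.Icc a (a + ((2:ℝ)^l)⁻¹))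
    (hut : u ≤ t) : |FF n ε t - FF n ε u| ≤ 2 := by
  set h : ℝ := ((2:ℝ)^l)⁻¹ with hh
  have hpos : 0 < h := by rw [hh]; positivity
  have hd : t - u ≤ h := by
    obtain ⟨h1, h2⟩ := ht; obtain ⟨h3, h4⟩ := hu; linarith
  have hdiff : FF n ε t - FF n ε u
      = (∑ r ∈ Finset.range n, (ind (ε + radInv r) t - ind (ε + radInv r) u))
      + (∑ r ∈ Finset.range n, (ind (1 - ε - radInv r) t - ind (1 - ε - radInv r) u))
      - 2*n*(t - u) := by
    unfold FF
    rw [Finset.sum_add_distrib, Finset.sum_add_distrib, Finset.sum_sub_distrib,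
      Finset.sum_sub_distrib]
    ring
  have hsep1 : ∀ r r', r < n → r' < n → r ≠ r' → h ≤ |(ε + radInv r) - (ε + radInv r')| := by
    intro r r' hr hr' hne
    rw [show (ε + radInv r) - (ε + radInv r') = radInv r - radInv r' from by ring]
    exact radInv_sep (lt_of_lt_of_le hr hn) (lt_of_lt_of_le hr' hn) hne
  have hsep2 : ∀ r r', r < n → r' < n → r ≠ r' →
      h ≤ |(1 - ε - radInv r) - (1 - ε - radInv r')| := by
    intro r r' hr hr' hne
    rw [show (1 - ε - radInv r) - (1 - ε - radInv r') = -(radInv r - radInv r') from by ring,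
      abs_neg]
    exact radInv_sep (lt_of_lt_of_le hr hn) (lt_of_lt_of_le hr' hn) hne
  have hS1le := sum_ind_diff_le hn (fun r => ε + radInv r) hsep1 hut hd
  have hS2le := sum_ind_diff_le hn (fun r => 1 - ε - radInv r) hsep2 hut hd
  have hS1ge := sum_ind_diff_nonneg n (fun r => ε + radInv r) hut
  have hS2ge := sum_ind_diff_nonneg n (fun r => 1 - ε - radInv r) hut
  have hslope : 2*(n:ℝ)*(t-u) ≤ 2 := by
    have h1 : (n:ℝ) ≤ 2^l := by exact_mod_cast hn
    have h2 : ((2:ℝ)^l) * h = 1 := by rw [hh]; field_simp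
    nlinarith
  have hslope0 : 0 ≤ 2*(n:ℝ)*(t-u) :=
    mul_nonneg (by positivity) (by linarith)
  rw [hdiff, abs_le]
  constructor <;> linarith

lemma FF_osc {n l : ℕ} (hn : n ≤ 2^l) (ε a : ℝ) {t u : ℝ}
    (ht : t ∈ Set.Icc a (a + ((2:ℝ)^l)⁻¹)) (hu : u ∈ Set.Icc a (a + ((2:ℝ)^l)⁻¹)) :
    |FF n ε t - FF n ε u| ≤ 2 := by
  rcases le_total u t with hut | htu
  · exact FF_osc_aux hn ε a ht hu hut
  · rw [abs_sub_comm]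
    exact FF_osc_aux hn ε a hu ht htu

lemma FF_sub_avg {n l : ℕ} (hn : n ≤ 2^l) (ε a : ℝ) {t : ℝ}
    (ht : t ∈ Set.Icc a (a + ((2:ℝ)^l)⁻¹)) :
    |FF n ε t - ((2:ℝ)^l) * ∫ u in a..(a + ((2:ℝ)^l)⁻¹), FF n ε u| ≤ 2 := by
  set h : ℝ := ((2:ℝ)^l)⁻¹ with hh
  have hpos : 0 < h := by rw [hh]; positivity
  have hinv : ((2:ℝ)^l) * h = 1 := by rw [hh]; field_simp
  set I : ℝ := ∫ u in a..(a + h), FF n ε u with hI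
  have key : FF n ε t - ((2:ℝ)^l) * I
      = ((2:ℝ)^l) * ∫ u in a..(a+h), (FF n ε t - FF n ε u) := by
    rw [intervalIntegral.integral_sub (intervalIntegrable_const) (FF_intble n ε _ _),
      intervalIntegral.integral_const]
    have : a + h - a = h := by ring
    rw [this, smul_eq_mul]
    rw [mul_sub, ← hI]
    rw [show ((2:ℝ)^l) * (h * FF n ε t) = (((2:ℝ)^l) * h) * FF n ε t from by ring, hinv]
    ring
  rw [key, abs_mul, abs_of_nonneg (by positivity : (0:ℝ) ≤ (2:ℝ)^l)]
  have hb : |∫ u in a..(a+h), (FF n ε t - FF n ε u)| ≤ 2 * |a + h - a| := by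
    have hbb := intervalIntegral.norm_integral_le_of_norm_le_const (C := 2)
      (f := fun u => FF n ε t - FF n ε u) (a := a) (b := a + h) ?_
    · simpa [Real.norm_eq_abs] using hbb
    · intro u hu
      rw [Set.uIoc_of_le (by linarith : a ≤ a + h)] at hu
      have hu' : u ∈ Set.Icc a (a + h) := ⟨hu.1.le, hu.2⟩
      have := FF_osc hn ε a ht hu'
      simpa [Real.norm_eq_abs] using this
  have : |a + h - a| = h := by rw [show a + h - a = h from by ring, abs_of_pos hpos]
  rw [this] at hb
  calc ((2:ℝ)^l) * |∫ u in a..(a+h), (FF n ε t - FF n ε u)| ≤ ((2:ℝ)^l) * (2*h) := by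
        apply mul_le_mul_of_nonneg_left hb (by positivity)
    _ = 2 := by rw [show ((2:ℝ)^l) * (2*h) = 2*(((2:ℝ)^l)*h) from by ring, hinv]; ring


lemma intble_of_bounded {f : ℝ → ℝ} {C : ℝ} {a b : ℝ} (hf : Measurable f)
    (h : ∀ t ∈ Set.uIoc a b, |f t| ≤ C) : IntervalIntegrable f volume a b := by
  rw [intervalIntegrable_iff]
  refine MeasureTheory.Integrable.mono' (g := fun _ => C)
    (MeasureTheory.integrableOn_const ?_) hf.aestronglyMeasurable
    ((MeasureTheory.ae_restrict_iff' measurableSet_uIoc).2 (Filter.Eventually.of_forall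
      (fun t ht => by simpa [Real.norm_eq_abs] using h t ht)))
  rw [Set.uIoc]
  exact measure_Ioc_lt_top.ne

lemma exp_FF_intble (n : ℕ) (ε lam : ℝ) {a b : ℝ} (hab : Set.uIoc a b ⊆ Set.Icc 0 1) :
    IntervalIntegrable (fun t => Real.exp (lam * FF n ε t)) volume a b := by
  apply intble_of_bounded (C := Real.exp (|lam| * (4*n)))
  · exact Real.measurable_exp.comp ((FF_meas n ε).const_mul lam)
  · intro t ht
    have ht' := hab ht
    rw [abs_of_pos (Real.exp_pos _)]
    apply Real.exp_le_exp.2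
    calc lam * FF n ε t ≤ |lam * FF n ε t| := le_abs_self _
      _ = |lam| * |FF n ε t| := abs_mul _ _
      _ ≤ |lam| * (4*n) := by
          apply mul_le_mul_of_nonneg_left (FF_bound n ε t ht'.1 ht'.2) (abs_nonneg _)

lemma FF_split (l n' : ℕ) (hn' : n' < 2^l) (ε t : ℝ) :
    FF (2^l + n') ε t = FF (2^l) ε t + FF n' (ε + ((2:ℝ)^(l+1))⁻¹) t := by
  unfold FF
  rw [sum_range_add'']
  have hr : ∀ r ∈ Finset.range n',
      (ind (ε + radInv (2^l + r)) t + ind (1 - ε - radInv (2^l + r)) t)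
      = (ind ((ε + ((2:ℝ)^(l+1))⁻¹) + radInv r) t
          + ind (1 - (ε + ((2:ℝ)^(l+1))⁻¹) - radInv r) t) := by
    intro r hrr
    have : radInv (2^l + r) = ((2:ℝ)^(l+1))⁻¹ + radInv r :=
      radInv_pow_add (lt_trans (Finset.mem_range.1 hrr) hn')
    rw [this,
      show ε + (((2:ℝ)^(l+1))⁻¹ + radInv r) = (ε + ((2:ℝ)^(l+1))⁻¹) + radInv r from by ring,
      show 1 - ε - (((2:ℝ)^(l+1))⁻¹ + radInv r) = 1 - (ε + ((2:ℝ)^(l+1))⁻¹) - radInv r from by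
        ring]
  rw [Finset.sum_congr rfl hr]
  push_cast
  ring

lemma exp_FF_bound (n : ℕ) : ∀ (ε : ℝ), 0 ≤ ε → ε < ((2:ℝ)^(Nat.size n))⁻¹ →
    ∀ lam : ℝ, |lam| ≤ 1/4 →
    (∫ t in (0:ℝ)..1, Real.exp (lam * FF n ε t))
      ≤ Real.exp (16 * lam^2 * (Nat.size n)) := by
  induction n using Nat.strong_induction_on with
  | _ n ih =>
  intro ε hε0 hεlt lam hlam
  rcases Nat.eq_zero_or_pos n with hn0 | hnpos
  · subst hn0
    have : ∀ t : ℝ, FF 0 ε t = 0 := by intro t; unfold FF; simp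
    simp only [this, mul_zero, Real.exp_zero, intervalIntegral.integral_const, smul_eq_mul,
      mul_one, sub_zero, Nat.size_zero, Nat.cast_zero]
    norm_num
  · -- main case
    set l : ℕ := n.size - 1 with hl
    have hsz : n.size = l + 1 := by
      have := Nat.size_pos.2 hnpos
      omega
    have h2ln : 2^l ≤ n := Nat.lt_size.1 (by omega)
    have hlt : n < 2^(l+1) := by rw [← hsz]; exact Nat.lt_size_self n
    set n' : ℕ := n - 2^l with hn'def
    have hn'lt : n' < 2^l := by
      have : (2:ℕ)^(l+1) = 2^l + 2^l := by ring
      omega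
    have hsplitn : n = 2^l + n' := by omega
    set h : ℝ := ((2:ℝ)^l)⁻¹ with hh
    have hpos : 0 < h := by rw [hh]; positivity
    have hinv : ((2:ℝ)^l) * h = 1 := by rw [hh]; field_simp
    set ε' : ℝ := ε + ((2:ℝ)^(l+1))⁻¹ with hε'def
    have hεh : ε < ((2:ℝ)^(l+1))⁻¹ := by rw [← hsz]; exact hεlt
    have hpow_succ : ((2:ℝ)^(l+1))⁻¹ = h/2 := by
      rw [hh, pow_succ]
      field_simp
    have hε'0 : 0 ≤ ε' := by
      rw [hε'def]; positivity
    have hε'lt : ε' < ((2:ℝ)^(Nat.size n'))⁻¹ := by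
      have h1 : ε' < h := by rw [hε'def, hpow_succ]; linarith [hεh, hpow_succ]
      have h2 : ((2:ℝ)^(Nat.size n')) ≤ (2:ℝ)^l := by
        apply pow_le_pow_right₀ (by norm_num)
        exact Nat.size_le.2 hn'lt
      calc ε' < h := h1
        _ = ((2:ℝ)^l)⁻¹ := hh
        _ ≤ ((2:ℝ)^(Nat.size n'))⁻¹ := by
            apply inv_anti₀ (by positivity) h2
    have hεleh : ε ≤ h := by
      rw [hpow_succ] at hεh; linarith
    have IH := ih n' (by omega) ε' hε'0 hε'lt lam hlam
    -- atoms
    have hatomsub : ∀ i : ℕ, i < 2^l →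
        Set.uIoc ((i:ℝ)*h) (((i:ℝ)+1)*h) ⊆ Set.Icc 0 1 := by
      intro i hi
      rw [Set.uIoc_of_le (by nlinarith : (i:ℝ)*h ≤ ((i:ℝ)+1)*h)]
      intro x hx
      have hi' : ((i:ℝ)+1) ≤ (2:ℝ)^l := by
        have : (i:ℝ)+1 ≤ ((2^l : ℕ):ℝ) := by exact_mod_cast hi
        rwa [Nat.cast_pow, Nat.cast_ofNat] at this
      constructor
      · have : 0 ≤ (i:ℝ)*h := by positivity
        linarith [hx.1]
      · have : ((i:ℝ)+1)*h ≤ ((2:ℝ)^l)*h := by nlinarith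
        rw [hinv] at this
        linarith [hx.2]
    -- the per-atom estimate
    have key : ∀ i : ℕ, i < 2^l →
        (∫ t in ((i:ℝ)*h)..(((i:ℝ)+1)*h), Real.exp (lam * FF n ε t))
          ≤ (1 + 16*lam^2) * ∫ t in ((i:ℝ)*h)..(((i:ℝ)+1)*h), Real.exp (lam * FF n' ε' t) := by
      intro i hi
      set a : ℝ := (i:ℝ)*h with ha
      set b : ℝ := ((i:ℝ)+1)*h with hb
      have hab : a ≤ b := by rw [ha, hb]; nlinarith
      have hbaeq : b - a = h := by rw [ha, hb]; ring
      have hbaeq' : b = a + h := by rw [ha, hb]; ring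
      set c : ℝ := ((2:ℝ)^l) * ∫ u in a..b, FF n' ε' u with hc
      have hIc : (∫ u in a..b, FF n' ε' u) = c * h := by
        rw [hc]
        rw [show ((2:ℝ)^l) * (∫ u in a..b, FF n' ε' u) * h
          = (((2:ℝ)^l) * h) * (∫ u in a..b, FF n' ε' u) from by ring, hinv, one_mul]
      have htop0 : (∫ u in a..b, FF (2^l) ε u) = 0 := integral_FF_top_atom l i hi ε hε0 hεleh
      have hFFsplit : ∀ t : ℝ, FF n ε t = FF (2^l) ε t + FF n' ε' t := by
        intro t
        rw [hsplitn]
        exact FF_split l n' hn'lt ε t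
      have hIFF : (∫ u in a..b, FF n ε u) = c * h := by
        have : (∫ u in a..b, FF n ε u) = (∫ u in a..b, (FF (2^l) ε u + FF n' ε' u)) := by
          apply intervalIntegral.integral_congr
          intro u _
          exact hFFsplit u
        rw [this, intervalIntegral.integral_add (FF_intble _ _ _ _) (FF_intble _ _ _ _),
          htop0, hIc, zero_add]
      -- pointwise bound on Icc a b
      have hZ : ∀ t ∈ Set.Icc a b, |FF n ε t - c| ≤ 4 := by
        intro t ht
        have ht' : t ∈ Set.Icc a (a + h) := by rwa [← hbaeq']
        have h1 : |FF (2^l) ε t| ≤ 2 := by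
          have := FF_sub_avg (le_refl (2^l)) ε a (t := t) ht'
          rw [← hbaeq', htop0, mul_zero, sub_zero] at this
          exact this
        have h2 : |FF n' ε' t - c| ≤ 2 := by
          have := FF_sub_avg (le_of_lt hn'lt) ε' a (t := t) ht'
          rw [← hbaeq', ← hc] at this
          exact this
        calc |FF n ε t - c| = |FF (2^l) ε t + (FF n' ε' t - c)| := by rw [hFFsplit t]; ring_nf
          _ ≤ |FF (2^l) ε t| + |FF n' ε' t - c| := abs_add_le _ _
          _ ≤ 4 := by linarith
      have hptwise : ∀ t ∈ Set.Icc a b,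
          Real.exp (lam * FF n ε t)
            ≤ Real.exp (lam * c) * (1 + 16*lam^2) + (Real.exp (lam*c) * lam) * (FF n ε t - c) := by
        intro t ht
        have hzb := hZ t ht
        have habs : |lam * (FF n ε t - c)| ≤ 1 := by
          rw [abs_mul]
          calc |lam| * |FF n ε t - c| ≤ (1/4) * 4 :=
            mul_le_mul hlam hzb (abs_nonneg _) (by norm_num)
            _ = 1 := by norm_num
        have hexp := Real.abs_exp_sub_one_sub_id_le habs
        have h2 : Real.exp (lam * (FF n ε t - c)) ≤ 1 + lam * (FF n ε t - c) + (lam*(FF n ε t - c))^2 := by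
          have := abs_le.1 hexp
          linarith [this.2]
        have h3 : (lam*(FF n ε t - c))^2 ≤ 16 * lam^2 := by
          rw [mul_pow]
          have : (FF n ε t - c)^2 ≤ 16 := by
            have := sq_le_sq' (neg_le_of_abs_le hzb) (le_of_abs_le hzb)
            nlinarith
          nlinarith [sq_nonneg lam]
        calc Real.exp (lam * FF n ε t) = Real.exp (lam*c) * Real.exp (lam * (FF n ε t - c)) := by
              rw [← Real.exp_add]; ring_nf
          _ ≤ Real.exp (lam*c) * (1 + lam * (FF n ε t - c) + 16*lam^2) := by
              apply mul_le_mul_of_nonneg_left ?_ (Real.exp_pos _).le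
              linarith
          _ = Real.exp (lam * c) * (1 + 16*lam^2) + (Real.exp (lam*c) * lam) * (FF n ε t - c) := by
              ring
      have hint1 : IntervalIntegrable (fun t => Real.exp (lam * FF n ε t)) volume a b :=
        exp_FF_intble n ε lam (hatomsub i hi)
      have hint2 : IntervalIntegrable
          (fun t => Real.exp (lam * c) * (1 + 16*lam^2) + (Real.exp (lam*c) * lam) * (FF n ε t - c))
          volume a b := by
        apply IntervalIntegrable.add intervalIntegrable_const
        exact (((FF_intble n ε a b).sub intervalIntegrable_const).const_mul _)
      have hstep1 : (∫ t in a..b, Real.exp (lam * FF n ε t))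
          ≤ ∫ t in a..b, (Real.exp (lam * c) * (1 + 16*lam^2)
              + (Real.exp (lam*c) * lam) * (FF n ε t - c)) :=
        intervalIntegral.integral_mono_on hab hint1 hint2 hptwise
      have hfun2 : (fun t => Real.exp (lam * c) * (1 + 16*lam^2)
              + (Real.exp (lam*c) * lam) * (FF n ε t - c))
          = (fun t => (Real.exp (lam * c) * (1 + 16*lam^2) - Real.exp (lam*c) * lam * c)
              + (Real.exp (lam*c) * lam) * FF n ε t) := funext fun u => by ring
      have hstep2 : (∫ t in a..b, (Real.exp (lam * c) * (1 + 16*lam^2)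
              + (Real.exp (lam*c) * lam) * (FF n ε t - c)))
          = Real.exp (lam*c) * (1 + 16*lam^2) * h := by
        rw [hfun2, intervalIntegral.integral_add intervalIntegrable_const
            ((FF_intble n ε a b).const_mul _),
          intervalIntegral.integral_const, intervalIntegral.integral_const_mul, hIFF]
        simp only [smul_eq_mul, hbaeq]
        ring
      -- lower bound for the n' integral
      have hstep3 : Real.exp (lam * c) * h ≤ ∫ t in a..b, Real.exp (lam * FF n' ε' t) := by
        have hpt : ∀ t ∈ Set.Icc a b,
            Real.exp (lam*c) * (1 + lam * (FF n' ε' t - c)) ≤ Real.exp (lam * FF n' ε' t) := by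
          intro t _
          calc Real.exp (lam*c) * (1 + lam * (FF n' ε' t - c))
              = Real.exp (lam*c) * (lam * (FF n' ε' t - c) + 1) := by ring
            _ ≤ Real.exp (lam*c) * Real.exp (lam * (FF n' ε' t - c)) := by
                apply mul_le_mul_of_nonneg_left (Real.add_one_le_exp _) (Real.exp_pos _).le
            _ = Real.exp (lam * FF n' ε' t) := by rw [← Real.exp_add]; ring_nf
        have hintg : IntervalIntegrable
            (fun t => Real.exp (lam*c) * (1 + lam * (FF n' ε' t - c))) volume a b := by
          apply IntervalIntegrable.const_mul
          apply IntervalIntegrable.add intervalIntegrable_const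
          exact ((FF_intble n' ε' a b).sub intervalIntegrable_const).const_mul _
        have := intervalIntegral.integral_mono_on hab hintg
          (exp_FF_intble n' ε' lam (hatomsub i hi)) hpt
        have hfun3 : (fun t => Real.exp (lam*c) * (1 + lam * (FF n' ε' t - c)))
            = (fun t => (Real.exp (lam*c) - Real.exp (lam*c) * lam * c)
                + (Real.exp (lam*c) * lam) * FF n' ε' t) := funext fun u => by ring
        calc Real.exp (lam * c) * h
            = ∫ t in a..b, Real.exp (lam*c) * (1 + lam * (FF n' ε' t - c)) := by
              rw [hfun3, intervalIntegral.integral_add intervalIntegrable_const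
                  ((FF_intble n' ε' a b).const_mul _),
                intervalIntegral.integral_const, intervalIntegral.integral_const_mul, hIc]
              simp only [smul_eq_mul, hbaeq]
              ring
          _ ≤ ∫ t in a..b, Real.exp (lam * FF n' ε' t) := this
      calc (∫ t in a..b, Real.exp (lam * FF n ε t))
          ≤ Real.exp (lam*c) * (1 + 16*lam^2) * h := le_trans hstep1 (le_of_eq hstep2)
        _ = (1 + 16*lam^2) * (Real.exp (lam*c) * h) := by ring
        _ ≤ (1 + 16*lam^2) * ∫ t in a..b, Real.exp (lam * FF n' ε' t) := by
            apply mul_le_mul_of_nonneg_left hstep3 (by positivity)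
    -- sum over atoms
    have hpart : ∀ (g : ℝ → ℝ), (∀ a b : ℝ, Set.uIoc a b ⊆ Set.Icc 0 1 →
        IntervalIntegrable g volume a b) →
        (∫ t in (0:ℝ)..1, g t) = ∑ i ∈ Finset.range (2^l),
          ∫ t in ((i:ℝ)*h)..(((i:ℝ)+1)*h), g t := by
      intro g hg
      have hint : ∀ k : ℕ, k < 2^l → IntervalIntegrable g volume ((k:ℝ)*h) (((k+1:ℕ):ℝ)*h) := by
        intro k hk
        have hsub : Set.uIoc ((k:ℝ)*h) (((k:ℝ)+1)*h) ⊆ Set.Icc 0 1 := hatomsub k hk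
        have hcast : (((k+1:ℕ)):ℝ)*h = ((k:ℝ)+1)*h := by push_cast; ring
        rw [hcast]
        exact hg ((k:ℝ)*h) (((k:ℝ)+1)*h) hsub
      have hsum := intervalIntegral.sum_integral_adjacent_intervals (μ := volume)
        (a := fun i : ℕ => (i:ℝ)*h) (f := g) hint
      push_cast at hsum
      rw [zero_mul, show (2:ℝ)^l * h = 1 from hinv] at hsum
      exact hsum.symm
    have hFn := hpart (fun t => Real.exp (lam * FF n ε t)) (fun a b hsub => exp_FF_intble n ε lam hsub)
    have hFn' := hpart (fun t => Real.exp (lam * FF n' ε' t)) (fun a b hsub => exp_FF_intble n' ε' lam hsub)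
    calc (∫ t in (0:ℝ)..1, Real.exp (lam * FF n ε t))
        = ∑ i ∈ Finset.range (2^l), ∫ t in ((i:ℝ)*h)..(((i:ℝ)+1)*h), Real.exp (lam * FF n ε t) := hFn
      _ ≤ ∑ i ∈ Finset.range (2^l),
          (1 + 16*lam^2) * ∫ t in ((i:ℝ)*h)..(((i:ℝ)+1)*h), Real.exp (lam * FF n' ε' t) :=
          Finset.sum_le_sum (fun i hi => key i (Finset.mem_range.1 hi))
      _ = (1 + 16*lam^2) * ∑ i ∈ Finset.range (2^l),
          ∫ t in ((i:ℝ)*h)..(((i:ℝ)+1)*h), Real.exp (lam * FF n' ε' t) := by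
          rw [Finset.mul_sum]
      _ = (1 + 16*lam^2) * ∫ t in (0:ℝ)..1, Real.exp (lam * FF n' ε' t) := by rw [← hFn']
      _ ≤ (1 + 16*lam^2) * Real.exp (16 * lam^2 * (Nat.size n')) := by
          apply mul_le_mul_of_nonneg_left IH (by positivity)
      _ ≤ Real.exp (16*lam^2) * Real.exp (16 * lam^2 * (Nat.size n')) := by
          apply mul_le_mul_of_nonneg_right (by linarith [Real.add_one_le_exp (16*lam^2)])
            (Real.exp_pos _).le
      _ = Real.exp (16*lam^2 * (1 + (Nat.size n'))) := by
          rw [← Real.exp_add]; ring_nf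
      _ ≤ Real.exp (16 * lam^2 * (Nat.size n)) := by
          apply Real.exp_le_exp.2
          have hsle : (Nat.size n' : ℝ) ≤ (l:ℝ) := by exact_mod_cast Nat.size_le.2 hn'lt
          have hneq : ((Nat.size n : ℕ):ℝ) = (l:ℝ) + 1 := by exact_mod_cast hsz
          nlinarith [sq_nonneg lam]


lemma pow_le_exp_aux (y : ℝ) (hy : 0 ≤ y) (m : ℕ) (hm : 1 ≤ m) :
    y^m ≤ (m:ℝ)^m * Real.exp y := by
  have hm' : (0:ℝ) < m := by exact_mod_cast hm
  have h1 : y ≤ (m:ℝ) * (1 + y/(m:ℝ)) := by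
    rw [mul_add, mul_one, mul_div_cancel₀ _ (ne_of_gt hm')]
    linarith
  have h2 : y^m ≤ ((m:ℝ)*(1 + y/(m:ℝ)))^m := pow_le_pow_left₀ hy h1 m
  have h3 : ((m:ℝ)*(1+y/(m:ℝ)))^m = (m:ℝ)^m * (1+y/(m:ℝ))^m := mul_pow _ _ m
  have h4 : (1+y/(m:ℝ))^m ≤ (Real.exp (y/(m:ℝ)))^m := by
    apply pow_le_pow_left₀ (by positivity)
    linarith [Real.add_one_le_exp (y/(m:ℝ))]
  have h5 : (Real.exp (y/(m:ℝ)))^m = Real.exp y := by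
    rw [← Real.exp_nat_mul]
    congr 1
    field_simp
  have h6 : (m:ℝ)^m * (1+y/(m:ℝ))^m ≤ (m:ℝ)^m * Real.exp y := by
    rw [← h5]
    apply mul_le_mul_of_nonneg_left h4 (by positivity)
  calc y^m ≤ ((m:ℝ)*(1 + y/(m:ℝ)))^m := h2
    _ = (m:ℝ)^m * (1+y/(m:ℝ))^m := h3
    _ ≤ (m:ℝ)^m * Real.exp y := h6

lemma abs_pow_le_exps (F : ℝ) (m : ℕ) (hm : 1 ≤ m) (lam : ℝ) (hl : 0 < lam) :
    |F|^m ≤ (m:ℝ)^m * lam⁻¹^m * (Real.exp (lam*F) + Real.exp (-(lam*F))) := by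
  have h0 : (lam*|F|)^m ≤ (m:ℝ)^m * Real.exp (lam*|F|) :=
    pow_le_exp_aux _ (by positivity) m hm
  have h1 : Real.exp (lam*|F|) ≤ Real.exp (lam*F) + Real.exp (-(lam*F)) := by
    rcases abs_cases F with ⟨he, _⟩ | ⟨he, _⟩
    · rw [he]
      linarith [Real.exp_pos (-(lam*F))]
    · rw [he, show lam * -F = -(lam*F) from by ring]
      linarith [Real.exp_pos (lam*F)]
  have h2 : |F|^m = lam⁻¹^m * (lam*|F|)^m := by
    rw [← mul_pow]
    congr 1
    field_simp
  rw [h2]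
  calc lam⁻¹^m * (lam*|F|)^m ≤ lam⁻¹^m * ((m:ℝ)^m * Real.exp (lam*|F|)) := by
        apply mul_le_mul_of_nonneg_left h0 (by positivity)
    _ ≤ lam⁻¹^m * ((m:ℝ)^m * (Real.exp (lam*F) + Real.exp (-(lam*F)))) := by
        apply mul_le_mul_of_nonneg_left ?_ (by positivity)
        apply mul_le_mul_of_nonneg_left h1 (by positivity)
    _ = (m:ℝ)^m * lam⁻¹^m * (Real.exp (lam*F) + Real.exp (-(lam*F))) := by ring

lemma add_one_pow_le (a : ℝ) (ha : 0 ≤ a) (m : ℕ) :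
    (a+1)^m ≤ 2^m * (a^m + 1) := by
  have h2m : (0:ℝ) < 2^m := by positivity
  rcases le_total a 1 with h | h
  · have h1 : (a+1)^m ≤ 2^m := pow_le_pow_left₀ (by linarith) (by linarith) m
    nlinarith [pow_nonneg ha m]
  · have h1 : (a+1)^m ≤ (2*a)^m := pow_le_pow_left₀ (by linarith) (by linarith) m
    have h2 : ((2:ℝ)*a)^m = 2^m * a^m := mul_pow _ _ m
    nlinarith

lemma vdcSym_even (m : ℕ) : vdcSym (2*m) = radInv m := by
  unfold vdcSym
  rw [if_pos (Nat.mul_mod_right 2 m), Nat.mul_div_cancel_left m (by norm_num)]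

lemma vdcSym_odd (m : ℕ) : vdcSym (2*m+1) = 1 - radInv m := by
  unfold vdcSym
  rw [if_neg (by omega), show (2*m+1)/2 = m from by omega]

lemma vdcSym_nonneg (i : ℕ) : 0 ≤ vdcSym i := by
  unfold vdcSym
  split
  · exact radInv_nonneg _
  · linarith [radInv_lt_one (i/2)]

lemma indicator_eq_ind (z t : ℝ) (hz : 0 ≤ z) :
    Set.indicator (Set.Ico (0:ℝ) t) (fun _ => (1:ℝ)) z = ind z t := by
  rw [Set.indicator_apply]
  unfold ind
  by_cases h : z < t
  · rw [if_pos ⟨hz, h⟩, if_pos h]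
  · rw [if_neg (fun hh => h hh.2), if_neg h]

lemma disc_rep (N : ℕ) (hN : 0 < N) (t : ℝ) :
    (N:ℝ) * disc vdcSym N t
      = FF (N/2) 0 t + (if N % 2 = 1 then ind (radInv (N/2)) t - t else 0) := by
  have hN0 : ((N:ℝ)) ≠ 0 := by positivity
  unfold disc
  rw [mul_sub, mul_div_cancel₀ _ hN0]
  set n := N/2 with hn
  have hsum : ∀ M : ℕ, (∑ i ∈ Finset.range M,
      Set.indicator (Set.Ico (0:ℝ) t) (fun _ => (1:ℝ)) (vdcSym i))
      = ∑ i ∈ Finset.range M, ind (vdcSym i) t := by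
    intro M
    exact Finset.sum_congr rfl fun i _ => indicator_eq_ind _ t (vdcSym_nonneg i)
  have hFF0 : FF n 0 t = (∑ r ∈ Finset.range n, (ind (radInv r) t + ind (1 - radInv r) t))
      - 2*n*t := by
    unfold FF
    congr 1
    refine Finset.sum_congr rfl fun r _ => ?_
    rw [zero_add, show (1:ℝ) - 0 - radInv r = 1 - radInv r from by ring]
  have hpair : (∑ i ∈ Finset.range (2*n), ind (vdcSym i) t)
      = ∑ r ∈ Finset.range n, (ind (radInv r) t + ind (1 - radInv r) t) := by
    rw [sum_range_two_mul]
    exact Finset.sum_congr rfl fun r _ => by rw [vdcSym_even, vdcSym_odd]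
  rcases Nat.mod_two_eq_zero_or_one N with hpar | hpar
  · have hN2 : N = 2*n := by omega
    rw [if_neg (by omega)]
    rw [hsum, hN2, hpair, hFF0]
    push_cast [hN2]
    ring
  · have hN2 : N = 2*n+1 := by omega
    rw [if_pos hpar, hsum]
    rw [show Finset.range N = Finset.range (2*n+1) from by rw [← hN2]]
    rw [Finset.sum_range_succ, hpair, hFF0, vdcSym_even]
    push_cast [hN2]
    ring

end VdC

open VdC

theorem Lp_disc_sym_optimal (p : ℝ) (hp : 1 < p) :
    ∃ C > 0, ∀ N : ℕ, 2 ≤ N →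
      (∫ t in (0:ℝ)..1, |disc vdcSym N t|^p)^(1/p)
        ≤ C * Real.sqrt (Real.log N) / N := by
  have hp0 : 0 < p := by linarith
  set m : ℕ := ⌈p⌉₊ with hmdef
  have hm1 : 1 ≤ m := Nat.one_le_iff_ne_zero.2 (by
    intro h
    have := Nat.ceil_eq_zero.1 h
    linarith)
  have hpm : p ≤ (m:ℝ) := Nat.le_ceil p
  have hmR : (1:ℝ) ≤ (m:ℝ) := by exact_mod_cast hm1
  set E : ℝ := 2*Real.exp 1 + 1 with hEdef
  have hE1 : 1 ≤ E := by
    have := Real.exp_pos 1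
    rw [hEdef]; linarith
  have hlog2pos : (0:ℝ) < Real.log 2 := Real.log_pos one_lt_two
  set C : ℝ := 16*(m:ℝ)*E*Real.sqrt (2/Real.log 2) with hCdef
  have hCpos : 0 < C := by
    rw [hCdef]
    have h1 : 0 < Real.sqrt (2/Real.log 2) := Real.sqrt_pos.2 (by positivity)
    have hmpos : (0:ℝ) < (m:ℝ) := by linarith
    have hEpos : (0:ℝ) < E := by linarith
    exact mul_pos (mul_pos (mul_pos (by norm_num) hmpos) hEpos) h1
  refine ⟨C, hCpos, ?_⟩
  intro N hN
  have hNpos : (0:ℝ) < (N:ℝ) := by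
    have : 0 < N := by omega
    exact_mod_cast this
  set n : ℕ := N/2 with hndef
  have hn1 : 1 ≤ n := by omega
  set s : ℕ := n.size with hsdef
  have hs1 : 1 ≤ s := Nat.size_pos.2 (by omega)
  have hsR : (1:ℝ) ≤ (s:ℝ) := by exact_mod_cast hs1
  have hsq1 : 1 ≤ Real.sqrt s := by
    rw [show (1:ℝ) = Real.sqrt 1 from by simp]
    exact Real.sqrt_le_sqrt hsR
  have hsqpos : 0 < Real.sqrt s := by linarith
  set lam : ℝ := (4*Real.sqrt s)⁻¹ with hlamdef
  have hlampos : 0 < lam := by rw [hlamdef]; positivity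
  have hlam : |lam| ≤ 1/4 := by
    rw [abs_of_pos hlampos, hlamdef]
    rw [show (1:ℝ)/4 = 4⁻¹ from by norm_num]
    apply inv_anti₀ (by norm_num)
    nlinarith
  have hsqsq : Real.sqrt s ^ 2 = (s:ℝ) := Real.sq_sqrt (by positivity)
  have hlamsq : 16*lam^2*(s:ℝ) = 1 := by
    rw [hlamdef, inv_pow, mul_pow]
    have h4s : (4:ℝ)^2 * Real.sqrt s ^ 2 = 16 * s := by rw [hsqsq]; norm_num
    rw [h4s]
    field_simp
  -- exponential moment bounds
  have hF1 := exp_FF_bound n 0 le_rfl (by positivity) lam hlam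
  have hF2 := exp_FF_bound n 0 le_rfl (by positivity) (-lam) (by rwa [abs_neg])
  rw [← hsdef] at hF1 hF2
  rw [hlamsq] at hF1
  rw [neg_pow, show (-1:ℝ)^2 = 1 from by norm_num, one_mul] at hF2
  -- hF2 exponent : 16 * lam^2 * s after neg square
  rw [hlamsq] at hF2
  have hF2' : (∫ t in (0:ℝ)..1, Real.exp (-(lam * FF n 0 t))) ≤ Real.exp 1 := by
    have : ∀ t : ℝ, -lam * FF n 0 t = -(lam * FF n 0 t) := fun t => by ring
    calc (∫ t in (0:ℝ)..1, Real.exp (-(lam * FF n 0 t)))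
        = ∫ t in (0:ℝ)..1, Real.exp (-lam * FF n 0 t) := by
          apply intervalIntegral.integral_congr
          intro t _
          simp [neg_mul]
      _ ≤ Real.exp 1 := hF2
  -- integrability facts
  have hu01 : Set.uIoc (0:ℝ) 1 ⊆ Set.Icc 0 1 := by
    rw [Set.uIoc_of_le (by norm_num : (0:ℝ) ≤ 1)]
    exact Set.Ioc_subset_Icc_self
  have hexp1int : IntervalIntegrable (fun t => Real.exp (lam * FF n 0 t)) volume 0 1 :=
    exp_FF_intble n 0 lam hu01
  have hexp2int : IntervalIntegrable (fun t => Real.exp (-(lam * FF n 0 t))) volume 0 1 := by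
    have h := exp_FF_intble n 0 (-lam) hu01
    have he : (fun t => Real.exp (-lam * FF n 0 t)) = fun t => Real.exp (-(lam * FF n 0 t)) := by
      funext t; congr 1; ring
    rwa [he] at h
  have hFabsm_int : IntervalIntegrable (fun t => |FF n 0 t|^m) volume 0 1 := by
    apply intble_of_bounded (C := ((4*n:ℝ))^m)
    · exact (FF_meas n 0).abs.pow_const m
    · intro t ht
      have ht' := hu01 ht
      rw [abs_of_nonneg (by positivity : (0:ℝ) ≤ |FF n 0 t|^m)]
      exact pow_le_pow_left₀ (abs_nonneg _) (by
        have := FF_bound n 0 t ht'.1 ht'.2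
        push_cast
        linarith) m
  -- moment bound for FF
  have hFm : (∫ t in (0:ℝ)..1, |FF n 0 t|^m)
      ≤ (m:ℝ)^m * (4*Real.sqrt s)^m * (2*Real.exp 1) := by
    have hptw : ∀ t ∈ Set.Icc (0:ℝ) 1, |FF n 0 t|^m
        ≤ (m:ℝ)^m * lam⁻¹^m * (Real.exp (lam * FF n 0 t) + Real.exp (-(lam * FF n 0 t))) :=
      fun t _ => abs_pow_le_exps (FF n 0 t) m hm1 lam hlampos
    have hrint : IntervalIntegrable (fun t => (m:ℝ)^m * lam⁻¹^m *
        (Real.exp (lam * FF n 0 t) + Real.exp (-(lam * FF n 0 t)))) volume 0 1 :=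
      (hexp1int.add hexp2int).const_mul _
    have hmono := intervalIntegral.integral_mono_on (by norm_num : (0:ℝ) ≤ 1)
      hFabsm_int hrint hptw
    have hrval : (∫ t in (0:ℝ)..1, (m:ℝ)^m * lam⁻¹^m *
        (Real.exp (lam * FF n 0 t) + Real.exp (-(lam * FF n 0 t))))
        ≤ (m:ℝ)^m * lam⁻¹^m * (2*Real.exp 1) := by
      rw [intervalIntegral.integral_const_mul,
        intervalIntegral.integral_add hexp1int hexp2int]
      apply mul_le_mul_of_nonneg_left ?_ (by positivity)
      linarith
    rw [hlamdef, inv_inv] at hrval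
    calc (∫ t in (0:ℝ)..1, |FF n 0 t|^m)
        ≤ _ := hmono
      _ ≤ (m:ℝ)^m * (4*Real.sqrt s)^m * (2*Real.exp 1) := by
          rw [hlamdef, inv_inv] 
          exact hrval
  -- relation between disc and FF
  have hrep : ∀ t : ℝ, (N:ℝ) * disc vdcSym N t
      = FF n 0 t + (if N % 2 = 1 then ind (radInv n) t - t else 0) :=
    fun t => disc_rep N (by omega) t
  have hDmeas : Measurable (disc vdcSym N) := by
    have hfun : disc vdcSym N = fun t =>
        (FF n 0 t + (if N % 2 = 1 then ind (radInv n) t - t else 0)) / (N:ℝ) := by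
      funext t
      rw [← hrep t]
      field_simp
    rw [hfun]
    apply Measurable.div_const
    apply (FF_meas n 0).add
    by_cases hpar : N % 2 = 1
    · simp only [if_pos hpar]
      exact (ind_meas _).sub measurable_id
    · simp only [if_neg hpar]
      exact measurable_const
  have hND : ∀ t ∈ Set.Icc (0:ℝ) 1, |(N:ℝ) * disc vdcSym N t| ≤ |FF n 0 t| + 1 := by
    intro t ht
    rw [hrep t]
    calc |FF n 0 t + (if N % 2 = 1 then ind (radInv n) t - t else 0)|
        ≤ |FF n 0 t| + |(if N % 2 = 1 then ind (radInv n) t - t else 0)| := abs_add_le _ _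
      _ ≤ |FF n 0 t| + 1 := by
          apply add_le_add_right
          by_cases hpar : N % 2 = 1
          · simp only [if_pos hpar]
            rw [abs_le]
            constructor
            · linarith [ind_nonneg (radInv n) t, ht.2]
            · linarith [ind_le_one (radInv n) t, ht.1]
          · simp only [if_neg hpar, abs_zero]
            norm_num
  -- m-th moment of N * disc
  set M0 : ℝ := 8*(m:ℝ)*E*Real.sqrt s with hM0def
  have hM0pos : 0 < M0 := by
    rw [hM0def]
    have hmpos : (0:ℝ) < (m:ℝ) := by linarith
    have hEpos : (0:ℝ) < E := by linarith
    exact mul_pos (mul_pos (mul_pos (by norm_num) hmpos) hEpos) hsqpos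
  have hNDm_int : IntervalIntegrable (fun t => |(N:ℝ) * disc vdcSym N t|^m) volume 0 1 := by
    apply intble_of_bounded (C := ((4*n:ℝ)+1)^m)
    · exact ((measurable_const.mul hDmeas).abs.pow_const m)
    · intro t ht
      have ht' := hu01 ht
      rw [abs_of_nonneg (by positivity : (0:ℝ) ≤ |(N:ℝ) * disc vdcSym N t|^m)]
      apply pow_le_pow_left₀ (abs_nonneg _)
      have h1 := hND t ht'
      have h2 := FF_bound n 0 t ht'.1 ht'.2
      push_cast at h2 ⊢
      linarith
  have hNDm : (∫ t in (0:ℝ)..1, |(N:ℝ) * disc vdcSym N t|^m) ≤ M0^m := by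
    have hptw : ∀ t ∈ Set.Icc (0:ℝ) 1,
        |(N:ℝ) * disc vdcSym N t|^m ≤ 2^m * (|FF n 0 t|^m + 1) := by
      intro t ht
      calc |(N:ℝ) * disc vdcSym N t|^m ≤ (|FF n 0 t| + 1)^m :=
            pow_le_pow_left₀ (abs_nonneg _) (hND t ht) m
        _ ≤ 2^m * (|FF n 0 t|^m + 1) := add_one_pow_le _ (abs_nonneg _) m
    have hrint : IntervalIntegrable (fun t => 2^m * (|FF n 0 t|^m + 1)) volume 0 1 :=
      (hFabsm_int.add intervalIntegrable_const).const_mul _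
    have hmono := intervalIntegral.integral_mono_on (by norm_num : (0:ℝ) ≤ 1)
      hNDm_int hrint hptw
    have hrval : (∫ t in (0:ℝ)..1, 2^m * (|FF n 0 t|^m + 1))
        = 2^m * ((∫ t in (0:ℝ)..1, |FF n 0 t|^m) + 1) := by
      rw [intervalIntegral.integral_const_mul,
        intervalIntegral.integral_add hFabsm_int intervalIntegrable_const,
        intervalIntegral.integral_const]
      norm_num
    have hbig : 2^m * ((m:ℝ)^m * (4*Real.sqrt s)^m * (2*Real.exp 1) + 1) ≤ M0^m := by
      have hbase : (0:ℝ) ≤ 8*(m:ℝ)*Real.sqrt s := by positivity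
      have h8 : ((8:ℝ)*(m:ℝ)*Real.sqrt s)^m = 2^m * ((m:ℝ)^m * (4*Real.sqrt s)^m) := by
        rw [show (8:ℝ)*(m:ℝ)*Real.sqrt s = 2 * ((m:ℝ) * (4*Real.sqrt s)) from by ring,
          mul_pow, mul_pow]
      have h2le : (2:ℝ)^m ≤ (8*(m:ℝ)*Real.sqrt s)^m := by
        apply pow_le_pow_left₀ (by norm_num)
        nlinarith
      have hEm : E ≤ E^m := le_self_pow₀ hE1 (by omega)
      have hM0exp : M0^m = (8*(m:ℝ)*Real.sqrt s)^m * E^m := by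
        rw [hM0def, show 8*(m:ℝ)*E*Real.sqrt s = (8*(m:ℝ)*Real.sqrt s) * E from by ring,
          mul_pow]
      rw [hM0exp]
      have hexpand : 2^m * ((m:ℝ)^m * (4*Real.sqrt s)^m * (2*Real.exp 1) + 1)
          = (8*(m:ℝ)*Real.sqrt s)^m * (2*Real.exp 1) + 2^m := by
        rw [h8]; ring
      rw [hexpand]
      have hpowpos : (0:ℝ) < (8*(m:ℝ)*Real.sqrt s)^m := by positivity
      calc (8*(m:ℝ)*Real.sqrt s)^m * (2*Real.exp 1) + 2^m
          ≤ (8*(m:ℝ)*Real.sqrt s)^m * (2*Real.exp 1) + (8*(m:ℝ)*Real.sqrt s)^m := by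
            linarith
        _ = (8*(m:ℝ)*Real.sqrt s)^m * E := by rw [hEdef]; ring
        _ ≤ (8*(m:ℝ)*Real.sqrt s)^m * E^m := by
            apply mul_le_mul_of_nonneg_left hEm (by positivity)
    calc (∫ t in (0:ℝ)..1, |(N:ℝ) * disc vdcSym N t|^m)
        ≤ ∫ t in (0:ℝ)..1, 2^m * (|FF n 0 t|^m + 1) := hmono
      _ = 2^m * ((∫ t in (0:ℝ)..1, |FF n 0 t|^m) + 1) := hrval
      _ ≤ 2^m * ((m:ℝ)^m * (4*Real.sqrt s)^m * (2*Real.exp 1) + 1) := by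
          apply mul_le_mul_of_nonneg_left (by linarith) (by positivity)
      _ ≤ M0^m := hbig
  -- m-th moment of disc
  set Q : ℝ := M0/(N:ℝ) with hQdef
  have hQpos : 0 < Q := by rw [hQdef]; positivity
  have hDm_int : IntervalIntegrable (fun t => |disc vdcSym N t|^m) volume 0 1 := by
    apply intble_of_bounded (C := ((4*n:ℝ)+1)^m)
    · exact (hDmeas.abs.pow_const m)
    · intro t ht
      have ht' := hu01 ht
      rw [abs_of_nonneg (by positivity : (0:ℝ) ≤ |disc vdcSym N t|^m)]
      apply pow_le_pow_left₀ (abs_nonneg _)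
      have h1 := hND t ht'
      have h2 := FF_bound n 0 t ht'.1 ht'.2
      have h3 : |disc vdcSym N t| = |(N:ℝ) * disc vdcSym N t| / (N:ℝ) := by
        rw [abs_mul, abs_of_pos hNpos]
        field_simp
      rw [h3]
      have h4 : |(N:ℝ) * disc vdcSym N t| / (N:ℝ) ≤ |(N:ℝ) * disc vdcSym N t| := by
        apply div_le_self (abs_nonneg _)
        exact_mod_cast (by omega : 1 ≤ N)
      push_cast at h2 ⊢
      linarith
  have hDm : (∫ t in (0:ℝ)..1, |disc vdcSym N t|^m) ≤ Q^m := by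
    have heq : (∫ t in (0:ℝ)..1, |disc vdcSym N t|^m)
        = ((N:ℝ)⁻¹)^m * ∫ t in (0:ℝ)..1, |(N:ℝ)*disc vdcSym N t|^m := by
      rw [← intervalIntegral.integral_const_mul]
      apply intervalIntegral.integral_congr
      intro t _
      show |disc vdcSym N t|^m = ((N:ℝ)⁻¹)^m * |(N:ℝ)*disc vdcSym N t|^m
      rw [← mul_pow, abs_mul, abs_of_pos hNpos]
      congr 1
      field_simp
    rw [heq, hQdef, div_pow, div_eq_mul_inv, mul_comm (M0^m), ← inv_pow]
    apply mul_le_mul_of_nonneg_left hNDm (by positivity)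
  -- pointwise rpow bound
  have hptwp : ∀ t ∈ Set.Icc (0:ℝ) 1,
      |disc vdcSym N t|^p ≤ Q^p + Q^(p - (m:ℝ)) * |disc vdcSym N t|^m := by
    intro t _
    rcases le_or_gt (|disc vdcSym N t|) Q with hc | hc
    · have h1 : |disc vdcSym N t|^p ≤ Q^p :=
        Real.rpow_le_rpow (abs_nonneg _) hc hp0.le
      have h2 : (0:ℝ) ≤ Q^(p - (m:ℝ)) * |disc vdcSym N t|^m := by
        apply mul_nonneg (Real.rpow_nonneg hQpos.le _) (by positivity)
      linarith
    · have hpos' : (0:ℝ) < |disc vdcSym N t| := lt_trans hQpos hc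
      have h1 : |disc vdcSym N t|^p
          = |disc vdcSym N t|^((m:ℝ)) * |disc vdcSym N t|^(p - (m:ℝ)) := by
        rw [← Real.rpow_add hpos']
        congr 1
        ring
      have h2 : |disc vdcSym N t|^(p - (m:ℝ)) ≤ Q^(p - (m:ℝ)) :=
        Real.rpow_le_rpow_of_nonpos hQpos hc.le (by linarith)
      have h3 : |disc vdcSym N t|^((m:ℝ)) = |disc vdcSym N t|^m :=
        Real.rpow_natCast _ m
      rw [h1, h3]
      have h4 : |disc vdcSym N t|^m * |disc vdcSym N t|^(p-(m:ℝ))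
          ≤ |disc vdcSym N t|^m * Q^(p-(m:ℝ)) := by
        apply mul_le_mul_of_nonneg_left h2 (by positivity)
      have h5 : (0:ℝ) ≤ Q^p := Real.rpow_nonneg hQpos.le _
      calc |disc vdcSym N t|^m * |disc vdcSym N t|^(p-(m:ℝ))
          ≤ |disc vdcSym N t|^m * Q^(p-(m:ℝ)) := h4
        _ = Q^(p-(m:ℝ)) * |disc vdcSym N t|^m := by ring
        _ ≤ Q^p + Q^(p-(m:ℝ)) * |disc vdcSym N t|^m := by linarith
  have hDp_int : IntervalIntegrable (fun t => |disc vdcSym N t|^p) volume 0 1 := by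
    apply intble_of_bounded (C := ((4*n:ℝ)+2)^p)
    · exact (hDmeas.abs.pow_const p)
    · intro t ht
      have ht' := hu01 ht
      rw [abs_of_nonneg (Real.rpow_nonneg (abs_nonneg _) p)]
      apply Real.rpow_le_rpow (abs_nonneg _) ?_ hp0.le
      have h1 := hND t ht'
      have h2 := FF_bound n 0 t ht'.1 ht'.2
      have h3 : |disc vdcSym N t| ≤ |(N:ℝ) * disc vdcSym N t| := by
        rw [abs_mul, abs_of_pos hNpos]
        have hN2 : (2:ℝ) ≤ (N:ℝ) := by exact_mod_cast hN
        nlinarith [mul_nonneg (by linarith : (0:ℝ) ≤ (N:ℝ) - 1)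
          (abs_nonneg (disc vdcSym N t))]
      push_cast at h2 ⊢
      linarith
  -- integral rpow bound
  have hIp : (∫ t in (0:ℝ)..1, |disc vdcSym N t|^p) ≤ 2 * Q^p := by
    have hrint : IntervalIntegrable
        (fun t => Q^p + Q^(p - (m:ℝ)) * |disc vdcSym N t|^m) volume 0 1 :=
      intervalIntegrable_const.add (hDm_int.const_mul _)
    have hmono := intervalIntegral.integral_mono_on (by norm_num : (0:ℝ) ≤ 1)
      hDp_int hrint hptwp
    have hrval : (∫ t in (0:ℝ)..1, (Q^p + Q^(p - (m:ℝ)) * |disc vdcSym N t|^m))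
        = Q^p + Q^(p - (m:ℝ)) * ∫ t in (0:ℝ)..1, |disc vdcSym N t|^m := by
      rw [intervalIntegral.integral_add intervalIntegrable_const (hDm_int.const_mul _),
        intervalIntegral.integral_const, intervalIntegral.integral_const_mul]
      norm_num
    have hQpm : Q^(p - (m:ℝ)) * Q^m = Q^p := by
      rw [← Real.rpow_natCast Q m, ← Real.rpow_add hQpos]
      congr 1
      ring
    calc (∫ t in (0:ℝ)..1, |disc vdcSym N t|^p)
        ≤ Q^p + Q^(p - (m:ℝ)) * ∫ t in (0:ℝ)..1, |disc vdcSym N t|^m := by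
          rw [← hrval]; exact hmono
      _ ≤ Q^p + Q^(p - (m:ℝ)) * Q^m := by
          apply add_le_add_right
          apply mul_le_mul_of_nonneg_left hDm (Real.rpow_nonneg hQpos.le _)
      _ = 2 * Q^p := by rw [hQpm]; ring
  -- take p-th root
  have hInn : (0:ℝ) ≤ ∫ t in (0:ℝ)..1, |disc vdcSym N t|^p := by
    apply intervalIntegral.integral_nonneg (by norm_num : (0:ℝ) ≤ 1)
    intro t _
    exact Real.rpow_nonneg (abs_nonneg _) p
  have hroot : (∫ t in (0:ℝ)..1, |disc vdcSym N t|^p)^(1/p) ≤ (2*Q^p)^(1/p) :=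
    Real.rpow_le_rpow hInn hIp (by positivity)
  have hroot2 : ((2:ℝ)*Q^p)^(1/p) = 2^(1/p) * Q := by
    rw [Real.mul_rpow (by norm_num) (Real.rpow_nonneg hQpos.le p)]
    congr 1
    rw [← Real.rpow_mul hQpos.le]
    rw [show p * (1/p) = 1 from by field_simp, Real.rpow_one]
  have hroot3 : (2:ℝ)^(1/p) ≤ 2 := by
    have h1 : (2:ℝ)^(1/p) ≤ 2^(1:ℝ) := by
      apply Real.rpow_le_rpow_of_exponent_le (by norm_num)
      rw [div_le_one hp0]
      linarith
    rwa [Real.rpow_one] at h1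
  have hchain1 : (∫ t in (0:ℝ)..1, |disc vdcSym N t|^p)^(1/p) ≤ 2 * Q := by
    calc (∫ t in (0:ℝ)..1, |disc vdcSym N t|^p)^(1/p)
        ≤ (2*Q^p)^(1/p) := hroot
      _ = 2^(1/p) * Q := hroot2
      _ ≤ 2 * Q := by apply mul_le_mul_of_nonneg_right hroot3 hQpos.le
  -- log bound on s
  have hslog : (s:ℝ) ≤ (2/Real.log 2) * Real.log N := by
    have h2s : 2^(s-1) ≤ n := Nat.lt_size.1 (by omega)
    have hc0 : ((2:ℝ))^(s-1) ≤ (N:ℝ) := by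
      have h1 : (2:ℕ)^(s-1) ≤ N := le_trans h2s (Nat.div_le_self N 2)
      exact_mod_cast h1
    have hc1 : (((s:ℝ)) - 1) * Real.log 2 ≤ Real.log N := by
      have hlog := Real.log_le_log (by positivity) hc0
      rw [Real.log_pow] at hlog
      have hcast : (((s-1:ℕ)):ℝ) = (s:ℝ) - 1 := by
        have : (1:ℕ) ≤ s := hs1
        push_cast [this]
        ring
      rwa [hcast] at hlog
    have hlogN : Real.log 2 ≤ Real.log N := by
      apply Real.log_le_log (by norm_num)
      exact_mod_cast hN
    rw [show (2/Real.log 2) * Real.log N = (2*Real.log N)/Real.log 2 from by ring,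
      le_div_iff₀ hlog2pos]
    nlinarith
  have hsqrt : Real.sqrt s ≤ Real.sqrt (2/Real.log 2) * Real.sqrt (Real.log N) := by
    rw [← Real.sqrt_mul (by positivity) (Real.log N)]
    exact Real.sqrt_le_sqrt hslog
  have hfin : 2 * Q ≤ C * Real.sqrt (Real.log N) / N := by
    have h1 : 16*(m:ℝ)*E*Real.sqrt s ≤ C * Real.sqrt (Real.log N) := by
      rw [hCdef]
      calc 16*(m:ℝ)*E*Real.sqrt s
          ≤ 16*(m:ℝ)*E*(Real.sqrt (2/Real.log 2) * Real.sqrt (Real.log N)) := by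
            apply mul_le_mul_of_nonneg_left hsqrt (by nlinarith : (0:ℝ) ≤ 16*(m:ℝ)*E)
        _ = 16*(m:ℝ)*E*Real.sqrt (2/Real.log 2) * Real.sqrt (Real.log N) := by ring
    rw [hQdef, hM0def,
      show (2:ℝ) * (8*(m:ℝ)*E*Real.sqrt s/(N:ℝ)) = (16*(m:ℝ)*E*Real.sqrt s)/(N:ℝ) from by ring]
    exact (div_le_div_iff_of_pos_right hNpos).2 h1
  calc (∫ t in (0:ℝ)..1, |disc vdcSym N t|^p)^(1/p) ≤ 2*Q := hchain1
    _ ≤ C * Real.sqrt (Real.log N) / N := hfin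
end
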